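/- arXiv:1611.09443 — 4 statements merged into one kernel-verified Lean document; each statement's English description precedes it below -/
import Mathlib

section
/- A subgroup G of O(2) containing a rotation T ∉ {Id, -Id} is complete: every ellipse E centered at the origin with TE = E is a disk. Conversely, if G ⊆ O(2) contains no rotation other than possibly ±Id, then G is not complete. -/
open MeasureTheory
open scoped InnerProductSpace ENNReal

noncomputable section

variable {F : Type*} [NormedAddCommGroup F] [InnerProductSpace ℝ F]

/-- An ellipsoid centered at the origin: the image of the closed unit ball
under an invertible linear map. -/
def IsEllipsoid (s : Set F) : Prop :=
  ∃ A : F ≃ₗ[ℝ] F, s = A '' Metric.closedBall 0 1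

/-- A Euclidean ball centered at the origin (with positive radius). -/
def IsCenteredBall (s : Set F) : Prop :=
  ∃ r : ℝ, 0 < r ∧ s = Metric.closedBall (0 : F) r

/-- A set `G` of linear isometries is a complete group of symmetries if every
(origin-centered) ellipsoid invariant under all elements of `G` is a ball. -/
def IsCompleteGroup (G : Set (F ≃ₗᵢ[ℝ] F)) : Prop :=
  ∀ s : Set F, IsEllipsoid s → (∀ T ∈ G, T '' s = s) → IsCenteredBall s

/-- A function on the unit sphere (w.r.t. the `d`-dimensional Hausdorff measure)
is isotropic: its centroid is at the origin and its second moments in all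
directions of the sphere coincide. -/
def IsotropicOnSphere [MeasurableSpace F] [BorelSpace F] (f : F → ℝ) (d : ℝ) : Prop :=
  (∫ x in Metric.sphere (0 : F) 1, f x • x ∂μH[d]) = 0 ∧
  ∃ c : ℝ, ∀ x ∈ Metric.sphere (0 : F) 1,
    (∫ y in Metric.sphere (0 : F) 1, f y * ⟪x, y⟫_ℝ ^ 2 ∂μH[d]) = c

/-- A function on the unit sphere is completely symmetric: its centroid is at
the origin and its symmetry group (inside the orthogonal group) is complete. -/
def CompletelySymmetricFun [MeasurableSpace F] [BorelSpace F] (f : F → ℝ) (d : ℝ) : Prop :=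
  (∫ x in Metric.sphere (0 : F) 1, f x • x ∂μH[d]) = 0 ∧
  IsCompleteGroup {T : F ≃ₗᵢ[ℝ] F | ∀ x ∈ Metric.sphere (0 : F) 1, f (T x) = f x}

/-- A subset of a (finite-dimensional) inner product space is completely symmetric:
its centroid is at the origin and its symmetry group is complete. -/
def CompletelySymmetricSet [MeasurableSpace F] [BorelSpace F] [FiniteDimensional ℝ F]
    (s : Set F) : Prop :=
  (∫ x in s, x) = 0 ∧ IsCompleteGroup {T : F ≃ₗᵢ[ℝ] F | T '' s = s}

/-- The radial function of a star body. -/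
def radialFn (K : Set F) (x : F) : ℝ := sSup {t : ℝ | 0 ≤ t ∧ t • x ∈ K}

/-- A star body: compact, star-shaped with respect to the origin, with nonempty interior. -/
def IsStarBody (K : Set F) : Prop :=
  IsCompact K ∧ (interior K).Nonempty ∧ ∀ x ∈ K, ∀ t ∈ Set.Icc (0:ℝ) 1, t • x ∈ K

/-- A convex body: compact, convex, with nonempty interior. -/
def IsConvexBody (K : Set F) : Prop :=
  IsCompact K ∧ Convex ℝ K ∧ (interior K).Nonempty

/-- The support function of a set. -/
def suppFn (L : Set F) (u : F) : ℝ := sSup ((fun x => ⟪x, u⟫_ℝ) '' L)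

/-- A rotation: a linear isometry of determinant one. -/
def IsRotation (T : F ≃ₗᵢ[ℝ] F) : Prop :=
  LinearMap.det (T.toLinearEquiv : F →ₗ[ℝ] F) = 1


section Stmt6AuxSec
open Metric Module

namespace Stmt6Aux

local notation "E2" => EuclideanSpace ℝ (Fin 2)

abbrev detI (T : E2 ≃ₗᵢ[ℝ] E2) : ℝ := LinearMap.det (T.toLinearEquiv : E2 →ₗ[ℝ] E2)

lemma mem_image_ball_iff {F : Type*} [NormedAddCommGroup F] [InnerProductSpace ℝ F]
    (A : F ≃ₗ[ℝ] F) (x : F) :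
    x ∈ A '' Metric.closedBall 0 1 ↔ ‖A.symm x‖ ≤ 1 := by
  rw [LinearEquiv.image_eq_preimage_symm]
  simp [mem_closedBall_zero_iff]

lemma norm_eq_of_image_ball {F : Type*} [NormedAddCommGroup F] [InnerProductSpace ℝ F]
    (C : F ≃ₗ[ℝ] F) (h : C '' Metric.closedBall 0 1 = Metric.closedBall 0 1) (x : F) :
    ‖C x‖ = ‖x‖ := by
  have key : ∀ D : F ≃ₗ[ℝ] F, (∀ y : F, ‖y‖ ≤ 1 → ‖D y‖ ≤ 1) → ∀ y, ‖D y‖ ≤ ‖y‖ := by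
    intro D hD y
    rcases eq_or_ne y 0 with rfl | hy
    · simp
    · have hny : 0 < ‖y‖ := norm_pos_iff.2 hy
      have h1 : ‖(‖y‖⁻¹ • y)‖ ≤ 1 := by
        rw [norm_smul, norm_inv, norm_norm, inv_mul_cancel₀ hny.ne']
      have h2 := hD _ h1
      rw [_root_.map_smul, norm_smul, norm_inv, norm_norm] at h2
      rw [inv_mul_le_iff₀ hny, mul_one] at h2
      exact h2
  have h1 : ∀ y : F, ‖y‖ ≤ 1 → ‖C y‖ ≤ 1 := by
    intro y hy
    have : C y ∈ Metric.closedBall (0 : F) 1 := by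
      rw [← h]; exact ⟨y, by simpa [mem_closedBall_zero_iff] using hy, rfl⟩
    simpa [mem_closedBall_zero_iff] using this
  have h2 : ∀ y : F, ‖y‖ ≤ 1 → ‖C.symm y‖ ≤ 1 := by
    intro y hy
    have hy' : y ∈ C '' Metric.closedBall 0 1 := by
      rw [h]; simpa [mem_closedBall_zero_iff] using hy
    rcases hy' with ⟨z, hz, rfl⟩
    simpa [mem_closedBall_zero_iff] using hz
  have hle := key C h1 x
  have hge := key C.symm h2 (C x)
  rw [C.symm_apply_apply] at hge
  exact le_antisymm hle hge

lemma eig_pm {F : Type*} [NormedAddCommGroup F] [InnerProductSpace ℝ F]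
    (T : F ≃ₗᵢ[ℝ] F) {v : F} {c : ℝ} (hv : v ≠ 0) (h : T v = c • v) :
    c = 1 ∨ c = -1 := by
  have h1 : ‖T v‖ = ‖v‖ := T.norm_map v
  rw [h, norm_smul] at h1
  have hnv : ‖v‖ ≠ 0 := norm_ne_zero_iff.2 hv
  have habs : |c| = 1 := by
    have := mul_right_cancel₀ hnv (by rw [h1, one_mul] : ‖c‖ * ‖v‖ = 1 * ‖v‖)
    simpa [Real.norm_eq_abs] using this
  rcases abs_eq (by norm_num : (0:ℝ) ≤ 1) |>.1 habs with h | h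
  · exact Or.inl h
  · exact Or.inr h

lemma li_of_orth {F : Type*} [NormedAddCommGroup F] [InnerProductSpace ℝ F] {v w : F}
    (hv : v ≠ 0) (hw : w ≠ 0) (hvw : ⟪v, w⟫_ℝ = 0) : LinearIndependent ℝ ![v, w] := by
  rw [linearIndependent_fin2]
  refine ⟨hw, fun a hav => hv ?_⟩
  simp only [Matrix.cons_val_one, Matrix.head_cons, Matrix.cons_val_zero] at hav
  have : ⟪v, v⟫_ℝ = 0 := by
    nth_rewrite 2 [← hav]
    rw [real_inner_smul_right, hvw, mul_zero]
  exact inner_self_eq_zero.1 this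


lemma det_pm (T : E2 ≃ₗᵢ[ℝ] E2) : detI T = 1 ∨ detI T = -1 := by
  set o := EuclideanSpace.basisFun (Fin 2) ℝ with ho
  have h := OrthonormalBasis.det_to_matrix_orthonormalBasis_real o (o.map T)
  have hco : ⇑(o.map T) = ⇑T ∘ ⇑o.toBasis := by
    funext i
    simp [OrthonormalBasis.map_apply]
  have hTc : ⇑T = ⇑(T.toLinearEquiv : E2 →ₗ[ℝ] E2) := rfl
  rw [hco, hTc, Basis.det_comp, Basis.det_self, mul_one] at h
  exact h

lemma det_eq_of_diag (T : E2 ≃ₗᵢ[ℝ] E2) {v w : E2} (hli : LinearIndependent ℝ ![v, w])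
    {c d : ℝ} (hTv : T v = c • v) (hTw : T w = d • w) : detI T = c * d := by
  have hcard : Fintype.card (Fin 2) = finrank ℝ E2 := by simp
  set b := basisOfLinearIndependentOfCardEqFinrank hli hcard with hbdef
  have hb : ⇑b = ![v, w] := coe_basisOfLinearIndependentOfCardEqFinrank hli hcard
  have h0 : b 0 = v := by rw [hb]; rfl
  have h1 : b 1 = w := by rw [hb]; rfl
  rw [detI, ← LinearMap.det_toMatrix b, Matrix.det_fin_two]
  have e00 : LinearMap.toMatrix b b (T.toLinearEquiv : E2 →ₗ[ℝ] E2) 0 0 = c := by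
    rw [LinearMap.toMatrix_apply, h0]
    show b.repr (T v) 0 = c
    rw [hTv, ← h0, _root_.map_smul, Basis.repr_self]
    simp
  have e10 : LinearMap.toMatrix b b (T.toLinearEquiv : E2 →ₗ[ℝ] E2) 1 0 = 0 := by
    rw [LinearMap.toMatrix_apply, h0]
    show b.repr (T v) 1 = 0
    rw [hTv, ← h0, _root_.map_smul, Basis.repr_self]
    simp
  have e01 : LinearMap.toMatrix b b (T.toLinearEquiv : E2 →ₗ[ℝ] E2) 0 1 = 0 := by
    rw [LinearMap.toMatrix_apply, h1]
    show b.repr (T w) 0 = 0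
    rw [hTw, ← h1, _root_.map_smul, Basis.repr_self]
    simp
  have e11 : LinearMap.toMatrix b b (T.toLinearEquiv : E2 →ₗ[ℝ] E2) 1 1 = d := by
    rw [LinearMap.toMatrix_apply, h1]
    show b.repr (T w) 1 = d
    rw [hTw, ← h1, _root_.map_smul, Basis.repr_self]
    simp
  rw [e00, e10, e01, e11]
  ring

lemma eq_smul_of_basis (T : E2 ≃ₗᵢ[ℝ] E2) {v w : E2} (hli : LinearIndependent ℝ ![v, w])
    {c : ℝ} (hTv : T v = c • v) (hTw : T w = c • w) (x : E2) : T x = c • x := by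
  have hcard : Fintype.card (Fin 2) = finrank ℝ E2 := by simp
  set b := basisOfLinearIndependentOfCardEqFinrank hli hcard with hbdef
  have hb : ⇑b = ![v, w] := coe_basisOfLinearIndependentOfCardEqFinrank hli hcard
  have h0 : b 0 = v := by rw [hb]; rfl
  have h1 : b 1 = w := by rw [hb]; rfl
  have heq : (T.toLinearEquiv : E2 →ₗ[ℝ] E2) = c • LinearMap.id := by
    apply b.ext
    intro i
    fin_cases i
    · show T (b 0) = (c • LinearMap.id) (b 0)
      rw [h0, hTv]; simp
    · show T (b 1) = (c • LinearMap.id) (b 1)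
      rw [h1, hTw]; simp
  have := LinearMap.congr_fun heq x
  simpa using this


lemma exists_orth_eigen (T : E2 ≃ₗᵢ[ℝ] E2) {v : E2} {c : ℝ} (hv : v ≠ 0) (hTv : T v = c • v) :
    ∃ w : E2, ∃ d : ℝ, w ≠ 0 ∧ ⟪v, w⟫_ℝ = 0 ∧ T w = d • w ∧ detI T = c * d := by
  haveI : Fact (finrank ℝ E2 = 1 + 1) := ⟨by simp⟩
  have hfin : finrank ℝ ((ℝ ∙ v)ᗮ) = 1 := Submodule.finrank_orthogonal_span_singleton hv
  haveI : Nontrivial ((ℝ ∙ v)ᗮ) := by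
    apply Module.nontrivial_of_finrank_pos (R := ℝ)
    rw [hfin]; norm_num
  obtain ⟨w₀, hw₀⟩ := exists_ne (0 : (ℝ ∙ v)ᗮ)
  have hw0 : (w₀ : E2) ≠ 0 := fun h => hw₀ (Subtype.ext h)
  have hc : c ≠ 0 := by
    intro h
    rw [h, zero_smul] at hTv
    exact hv (by simpa using congrArg ⇑T.symm hTv)
  have horth : ∀ u : E2, u ∈ (ℝ ∙ v)ᗮ → ⟪v, u⟫_ℝ = 0 :=
    fun u hu => (Submodule.mem_orthogonal (ℝ ∙ v) u).1 hu v (Submodule.mem_span_singleton_self v)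
  have hvw : ⟪v, (w₀ : E2)⟫_ℝ = 0 := horth _ w₀.2
  have hTw_mem : T (w₀ : E2) ∈ (ℝ ∙ v)ᗮ := by
    rw [Submodule.mem_orthogonal]
    intro x hx
    obtain ⟨a, rfl⟩ := Submodule.mem_span_singleton.1 hx
    have : ⟪v, T (w₀ : E2)⟫_ℝ = 0 := by
      have h1 : ⟪T v, T (w₀ : E2)⟫_ℝ = 0 := by rw [T.inner_map_map]; exact hvw
      rw [hTv, real_inner_smul_left] at h1
      exact (mul_eq_zero.1 h1).resolve_left hc
    rw [real_inner_smul_left, this, mul_zero]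
  obtain ⟨d, hd⟩ := (finrank_eq_one_iff_of_nonzero' w₀ hw₀).1 hfin ⟨T (w₀ : E2), hTw_mem⟩
  have hdw : T (w₀ : E2) = d • (w₀ : E2) := by
    have := congrArg (Subtype.val) hd
    simpa using this.symm
  have hli : LinearIndependent ℝ ![v, (w₀ : E2)] := li_of_orth hv hw0 hvw
  exact ⟨w₀, d, hw0, hvw, hdw, det_eq_of_diag T hli hTv hdw⟩

lemma no_eigen (T : E2 ≃ₗᵢ[ℝ] E2) (hdet : detI T = 1)
    (h1 : T ≠ LinearIsometryEquiv.refl ℝ (EuclideanSpace ℝ (Fin 2)))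
    (h2 : T ≠ LinearIsometryEquiv.neg ℝ) {v : E2} (hv : v ≠ 0) (c : ℝ) :
    T v ≠ c • v := by
  intro hTv
  obtain ⟨w, d, hw0, hvw, hTw, hcd⟩ := exists_orth_eigen T hv hTv
  rcases eig_pm T hv hTv with hc | hc
  · have hd1 : d = 1 := by rw [hdet, hc] at hcd; linarith
    have hall := eq_smul_of_basis T (li_of_orth hv hw0 hvw) (by rw [hTv, hc])
      (by rw [hTw, hd1])
    apply h1
    apply LinearIsometryEquiv.ext
    intro x
    simpa using hall x
  · have hd1 : d = -1 := by rw [hdet, hc] at hcd; linarith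
    have hall := eq_smul_of_basis T (li_of_orth hv hw0 hvw) (by rw [hTv, hc])
      (by rw [hTw, hd1])
    apply h2
    apply LinearIsometryEquiv.ext
    intro x
    have := hall x
    simp only [LinearIsometryEquiv.coe_neg]
    rw [this]
    module


lemma exists_eigen (f : E2 →ₗ[ℝ] E2) (hdet : LinearMap.det f = -1) :
    ∃ r : ℝ, ∃ x : E2, x ≠ 0 ∧ f x = r • x := by
  set b := (EuclideanSpace.basisFun (Fin 2) ℝ).toBasis with hbdef
  set Mt := LinearMap.toMatrix b b f with hMt
  have hdet' : Mt.det = -1 := by rw [hMt, LinearMap.det_toMatrix]; exact hdet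
  set t : ℝ := Mt 0 0 + Mt 1 1 with ht
  set sq : ℝ := Real.sqrt (t ^ 2 + 4) with hsq
  have hsq2 : sq ^ 2 = t ^ 2 + 4 := Real.sq_sqrt (by positivity)
  set r : ℝ := (t + sq) / 2 with hr
  have hdet0 : (Mt - r • 1).det = 0 := by
    rw [Matrix.det_fin_two] at hdet' ⊢
    simp only [Matrix.sub_apply, Matrix.smul_apply, Matrix.one_apply_eq,
      Matrix.one_apply_ne (by norm_num : (0 : Fin 2) ≠ 1),
      Matrix.one_apply_ne (by norm_num : (1 : Fin 2) ≠ 0), smul_eq_mul, mul_one, mul_zero,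
      sub_zero]
    rw [hr]
    linear_combination hdet' + hsq2 / 4 + ((t + sq) / 2) * ht
  obtain ⟨y, hy0, hy⟩ := (Matrix.exists_mulVec_eq_zero_iff).2 hdet0
  have hmul : Mt.mulVec y = r • y := by
    have hh : (Mt - r • (1 : Matrix (Fin 2) (Fin 2) ℝ)).mulVec y = Mt.mulVec y - r • y := by
      rw [Matrix.sub_mulVec, Matrix.smul_mulVec, Matrix.one_mulVec]
    rw [hy] at hh
    exact sub_eq_zero.1 hh.symm
  set x : E2 := b.repr.symm (Finsupp.equivFunOnFinite.symm y) with hx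
  have hrepr : ⇑(b.repr x) = y := by
    rw [hx, LinearEquiv.apply_symm_apply]
    rfl
  refine ⟨r, x, ?_, ?_⟩
  · intro h
    apply hy0
    rw [h] at hrepr
    simpa using hrepr.symm
  · have h2 : ⇑(b.repr (f x)) = ⇑(b.repr (r • x)) := by
      rw [← LinearMap.toMatrix_mulVec_repr b b f x, hrepr, hmul, _root_.map_smul,
        Finsupp.coe_smul, hrepr]
    exact b.repr.injective (DFunLike.coe_injective h2)

lemma det_mul (S T : E2 ≃ₗᵢ[ℝ] E2) : detI (S * T) = detI S * detI T := by
  have h : ((S * T).toLinearEquiv : E2 →ₗ[ℝ] E2)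
      = (S.toLinearEquiv : E2 →ₗ[ℝ] E2) ∘ₗ (T.toLinearEquiv : E2 →ₗ[ℝ] E2) := by
    ext x; rfl
  rw [detI, h, LinearMap.det_comp]

lemma det_one : detI (1 : E2 ≃ₗᵢ[ℝ] E2) = 1 := by
  have h : (((1 : E2 ≃ₗᵢ[ℝ] E2)).toLinearEquiv : E2 →ₗ[ℝ] E2) = LinearMap.id := by
    ext x; rfl
  rw [detI, h, LinearMap.det_id]

lemma det_inv (T : E2 ≃ₗᵢ[ℝ] E2) : detI T * detI T⁻¹ = 1 := by
  rw [← det_mul, mul_inv_cancel]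
  exact det_one


lemma key1 (T : E2 ≃ₗᵢ[ℝ] E2) (hrot : detI T = 1)
    (h1 : T ≠ LinearIsometryEquiv.refl ℝ (EuclideanSpace ℝ (Fin 2)))
    (h2 : T ≠ LinearIsometryEquiv.neg ℝ)
    (s : Set (EuclideanSpace ℝ (Fin 2))) (hs : IsEllipsoid s) (hinv : ⇑T '' s = s) :
    IsCenteredBall s := by
  obtain ⟨A, rfl⟩ := hs
  set B : E2 →ₗ[ℝ] E2 := (A.symm : E2 →ₗ[ℝ] E2) with hB
  have hBapp : ∀ x, B x = A.symm x := fun _ => rfl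
  set C : E2 ≃ₗ[ℝ] E2 := A ≪≫ₗ (T.toLinearEquiv ≪≫ₗ A.symm) with hCdef
  have hCapp : ∀ x, C x = A.symm (T (A x)) := fun _ => rfl
  have hCball : C '' Metric.closedBall 0 1 = Metric.closedBall 0 1 := by
    have hc : ⇑C = ⇑A.symm ∘ ⇑T ∘ ⇑A := rfl
    rw [hc, Set.image_comp, Set.image_comp, hinv, ← Set.image_comp]
    simp
  have hnorm : ∀ x, ‖B (T x)‖ = ‖B x‖ := by
    intro x
    have h := norm_eq_of_image_ball C hCball (A.symm x)
    rw [hCapp, A.apply_symm_apply] at h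
    rw [hBapp, hBapp, h]
  have hMdef : ∀ x y : E2, ⟪LinearMap.adjoint B (B x), y⟫_ℝ = ⟪B x, B y⟫_ℝ := fun x y =>
    LinearMap.adjoint_inner_left B y (B x)
  set M : E2 →ₗ[ℝ] E2 := (LinearMap.adjoint B) ∘ₗ B with hMd
  have hMin : ∀ x y : E2, ⟪M x, y⟫_ℝ = ⟪B x, B y⟫_ℝ := fun x y => hMdef x y
  have hsym : M.IsSymmetric := by
    intro x y
    rw [hMin]
    have : ⟪x, M y⟫_ℝ = ⟪B y, B x⟫_ℝ := by
      rw [real_inner_comm]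
      exact hMin y x
    rw [this, real_inner_comm]
  have hinner : ∀ x y, ⟪B (T x), B (T y)⟫_ℝ = ⟪B x, B y⟫_ℝ := by
    have polar : ∀ u v : E2, ⟪B u, B v⟫_ℝ
        = (‖B (u + v)‖ ^ 2 - ‖B u‖ ^ 2 - ‖B v‖ ^ 2) / 2 := by
      intro u v
      rw [map_add, norm_add_sq_real]
      ring
    intro x y
    rw [polar, polar, ← _root_.map_add T, hnorm, hnorm, hnorm]
  have hcomm : ∀ x, M (T x) = T (M x) := by
    intro x
    apply ext_inner_right ℝ
    intro y
    calc ⟪M (T x), y⟫_ℝ = ⟪B (T x), B (T (T.symm y))⟫_ℝ := by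
          rw [hMin, T.apply_symm_apply]
      _ = ⟪B x, B (T.symm y)⟫_ℝ := hinner _ _
      _ = ⟪M x, T.symm y⟫_ℝ := (hMin _ _).symm
      _ = ⟪T (M x), T (T.symm y)⟫_ℝ := (T.inner_map_map _ _).symm
      _ = ⟪T (M x), y⟫_ℝ := by rw [T.apply_symm_apply]
  have hfr : finrank ℝ E2 = 2 := finrank_euclideanSpace_fin
  set eb := hsym.eigenvectorBasis hfr with hebd
  set v := eb 0 with hvd
  set μ := hsym.eigenvalues hfr 0 with hμd
  have hv : M v = μ • v := hsym.apply_eigenvectorBasis hfr 0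
  have hvn : ‖v‖ = 1 := eb.orthonormal.1 0
  have hv0 : v ≠ 0 := by
    intro h
    rw [h, norm_zero] at hvn
    norm_num at hvn
  have hTv0 : T v ≠ 0 := fun h => hv0 (by simpa using congrArg ⇑T.symm h)
  have hli : LinearIndependent ℝ ![v, T v] := by
    rw [linearIndependent_fin2]
    refine ⟨hTv0, fun a hav => ?_⟩
    simp only [Matrix.cons_val_one, Matrix.head_cons, Matrix.cons_val_zero] at hav
    have ha0 : a ≠ 0 := by
      intro h
      rw [h, zero_smul] at hav
      exact hv0 hav.symm
    have hTva : T v = a⁻¹ • v := by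
      have h' := congrArg (fun z => a⁻¹ • z) hav
      simpa [smul_smul, inv_mul_cancel₀ ha0] using h'
    exact no_eigen T hrot h1 h2 hv0 a⁻¹ hTva
  have hMTv : M (T v) = μ • T v := by rw [hcomm, hv, _root_.map_smul]
  have hMall : ∀ x, M x = μ • x := by
    have hcard : Fintype.card (Fin 2) = finrank ℝ E2 := by simp
    set b := basisOfLinearIndependentOfCardEqFinrank hli hcard with hbdef
    have hb : ⇑b = ![v, T v] := coe_basisOfLinearIndependentOfCardEqFinrank hli hcard
    have h0 : b 0 = v := by rw [hb]; rfl
    have hb1 : b 1 = T v := by rw [hb]; rfl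
    have heq : M = μ • LinearMap.id := by
      apply b.ext
      intro i
      fin_cases i
      · show M (b 0) = (μ • LinearMap.id) (b 0)
        rw [h0, hv]; simp
      · show M (b 1) = (μ • LinearMap.id) (b 1)
        rw [hb1, hMTv]; simp
    intro x
    have := LinearMap.congr_fun heq x
    simpa using this
  have hBv0 : B v ≠ 0 := by
    intro h
    apply hv0
    have := congrArg ⇑A h
    rw [hBapp, A.apply_symm_apply] at this
    simpa using this
  have hμpos : 0 < μ := by
    have h2' : ⟪M v, v⟫_ℝ = μ := by
      rw [hv, real_inner_smul_left, real_inner_self_eq_norm_sq, hvn]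
      norm_num
    have h3 : ⟪M v, v⟫_ℝ = ‖B v‖ ^ 2 := by
      rw [hMin, real_inner_self_eq_norm_sq]
    have : 0 < ‖B v‖ := norm_pos_iff.2 hBv0
    nlinarith
  have hnormB : ∀ x, ‖B x‖ ^ 2 = μ * ‖x‖ ^ 2 := by
    intro x
    have h := hMin x x
    rw [hMall x, real_inner_smul_left, real_inner_self_eq_norm_sq,
      real_inner_self_eq_norm_sq] at h
    linarith
  have hsμ : 0 < Real.sqrt μ := Real.sqrt_pos.2 hμpos
  refine ⟨(Real.sqrt μ)⁻¹, by positivity, ?_⟩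
  ext x
  rw [mem_image_ball_iff, mem_closedBall_zero_iff]
  have hBx : ‖B x‖ = Real.sqrt μ * ‖x‖ := by
    have h := hnormB x
    have h2' : ‖B x‖ = Real.sqrt (μ * ‖x‖ ^ 2) := by
      rw [← h, Real.sqrt_sq (norm_nonneg _)]
    rw [h2', Real.sqrt_mul hμpos.le, Real.sqrt_sq (norm_nonneg _)]
  rw [← hBapp, hBx, show (Real.sqrt μ)⁻¹ = 1 / Real.sqrt μ by ring,
    le_div_iff₀ hsμ, mul_comm]


lemma image_ball_isometry (T : E2 ≃ₗᵢ[ℝ] E2) :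
    ⇑T '' Metric.closedBall 0 1 = Metric.closedBall 0 1 := by
  rw [T.image_closedBall, _root_.map_zero]

lemma not_complete (v w : E2) (hvn : ‖v‖ = 1) (hwn : ‖w‖ = 1) (hvw : ⟪v, w⟫_ℝ = 0)
    (G : Set (E2 ≃ₗᵢ[ℝ] E2))
    (hG : ∀ T ∈ G, ∃ e₁ e₂ : ℝ, T v = e₁ • v ∧ T w = e₂ • w) :
    ¬ IsCompleteGroup G := by
  have hv0 : v ≠ 0 := fun h => by rw [h, norm_zero] at hvn; norm_num at hvn
  have hw0 : w ≠ 0 := fun h => by rw [h, norm_zero] at hwn; norm_num at hwn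
  have hli : LinearIndependent ℝ ![v, w] := li_of_orth hv0 hw0 hvw
  have h2w0 : (2:ℝ) • w ≠ 0 := smul_ne_zero (by norm_num) hw0
  have hvw2 : ⟪v, (2:ℝ) • w⟫_ℝ = 0 := by rw [real_inner_smul_right, hvw, mul_zero]
  have hli2 : LinearIndependent ℝ ![v, (2:ℝ) • w] := li_of_orth hv0 h2w0 hvw2
  have hcard : Fintype.card (Fin 2) = finrank ℝ E2 := by simp
  set b := basisOfLinearIndependentOfCardEqFinrank hli hcard with hbd
  set b2 := basisOfLinearIndependentOfCardEqFinrank hli2 hcard with hb2d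
  have hb : ⇑b = ![v, w] := coe_basisOfLinearIndependentOfCardEqFinrank hli hcard
  have hb2 : ⇑b2 = ![v, (2:ℝ) • w] := coe_basisOfLinearIndependentOfCardEqFinrank hli2 hcard
  have hbv : b 0 = v := by rw [hb]; rfl
  have hbw : b 1 = w := by rw [hb]; rfl
  have hb2v : b2 0 = v := by rw [hb2]; rfl
  have hb2w : b2 1 = (2:ℝ) • w := by rw [hb2]; rfl
  set A : E2 ≃ₗ[ℝ] E2 := b.equiv b2 (Equiv.refl _) with hAd
  have hAv : A v = v := by
    have h := b.equiv_apply 0 b2 (Equiv.refl _)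
    simp only [Equiv.refl_apply, hbv, hb2v] at h
    exact h
  have hAw : A w = (2:ℝ) • w := by
    have h := b.equiv_apply 1 b2 (Equiv.refl _)
    simp only [Equiv.refl_apply, hbw, hb2w] at h
    exact h
  have hAsv : A.symm v = v := by
    nth_rewrite 1 [← hAv]
    exact A.symm_apply_apply v
  intro hcomp
  have hinv : ∀ T ∈ G, ⇑T '' (⇑A '' Metric.closedBall 0 1) = ⇑A '' Metric.closedBall 0 1 := by
    intro T hT
    obtain ⟨e₁, e₂, hTv, hTw⟩ := hG T hT
    have heq : (T.toLinearEquiv : E2 →ₗ[ℝ] E2) ∘ₗ (A : E2 →ₗ[ℝ] E2)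
        = (A : E2 →ₗ[ℝ] E2) ∘ₗ (T.toLinearEquiv : E2 →ₗ[ℝ] E2) := by
      apply b.ext
      intro i
      fin_cases i
      · show T (A (b 0)) = A (T (b 0))
        rw [hbv, hAv, hTv, _root_.map_smul, hAv]
      · show T (A (b 1)) = A (T (b 1))
        rw [hbw, hAw, _root_.map_smul T, hTw, _root_.map_smul A, hAw]
        exact smul_comm _ _ _
    have hcommTA : ∀ x, T (A x) = A (T x) := fun x => LinearMap.congr_fun heq x
    have hfun : ⇑T ∘ ⇑A = ⇑A ∘ ⇑T := by funext x; exact hcommTA x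
    rw [← Set.image_comp, hfun, Set.image_comp, image_ball_isometry]
  obtain ⟨r, hrpos, hball⟩ := hcomp (⇑A '' Metric.closedBall 0 1) ⟨A, rfl⟩ hinv
  have h2w_mem : (2:ℝ) • w ∈ ⇑A '' Metric.closedBall 0 1 :=
    ⟨w, by simp [mem_closedBall_zero_iff, hwn], hAw⟩
  have hr2 : 2 ≤ r := by
    rw [hball, mem_closedBall_zero_iff, norm_smul, hwn] at h2w_mem
    simpa using h2w_mem
  have h32 : (3/2 : ℝ) • v ∈ Metric.closedBall (0:E2) r := by
    rw [mem_closedBall_zero_iff, norm_smul, hvn]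
    simp only [mul_one]
    rw [show ‖(3/2 : ℝ)‖ = 3/2 by norm_num]
    linarith
  rw [← hball, mem_image_ball_iff, _root_.map_smul, hAsv, norm_smul, hvn] at h32
  norm_num at h32

end Stmt6Aux
end Stmt6AuxSec

/-- A subgroup of `O(2)` containing a rotation other than `±Id` is
complete (indeed any ellipse invariant under such a rotation is a disk); conversely a
subgroup of `O(2)` containing no rotation other than `±Id` is not complete. -/
theorem stmt6 :
    (∀ T : EuclideanSpace ℝ (Fin 2) ≃ₗᵢ[ℝ] EuclideanSpace ℝ (Fin 2),
      IsRotation T → T ≠ LinearIsometryEquiv.refl ℝ (EuclideanSpace ℝ (Fin 2)) →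
      T ≠ LinearIsometryEquiv.neg ℝ →
      ∀ s : Set (EuclideanSpace ℝ (Fin 2)), IsEllipsoid s → T '' s = s → IsCenteredBall s) ∧
    (∀ G : Subgroup (EuclideanSpace ℝ (Fin 2) ≃ₗᵢ[ℝ] EuclideanSpace ℝ (Fin 2)),
      (∃ T ∈ G, IsRotation T ∧ T ≠ LinearIsometryEquiv.refl ℝ (EuclideanSpace ℝ (Fin 2)) ∧
        T ≠ LinearIsometryEquiv.neg ℝ) →
      IsCompleteGroup (G : Set (EuclideanSpace ℝ (Fin 2) ≃ₗᵢ[ℝ] EuclideanSpace ℝ (Fin 2)))) ∧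
    (∀ G : Subgroup (EuclideanSpace ℝ (Fin 2) ≃ₗᵢ[ℝ] EuclideanSpace ℝ (Fin 2)),
      (∀ T ∈ G, IsRotation T → T = LinearIsometryEquiv.refl ℝ (EuclideanSpace ℝ (Fin 2)) ∨
        T = LinearIsometryEquiv.neg ℝ) →
      ¬ IsCompleteGroup (G : Set (EuclideanSpace ℝ (Fin 2) ≃ₗᵢ[ℝ] EuclideanSpace ℝ (Fin 2)))) := by
  constructor
  · intro T hrot h1 h2 s hs hinv
    exact Stmt6Aux.key1 T hrot h1 h2 s hs hinv
  constructor
  · rintro G ⟨T, hTG, hrot, h1, h2⟩ s hs hinv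
    exact Stmt6Aux.key1 T hrot h1 h2 s hs (hinv T hTG)
  · intro G hG
    by_cases href : ∃ R ∈ G, Stmt6Aux.detI R = -1
    · obtain ⟨R, hRG, hRdet⟩ := href
      obtain ⟨r, x, hx0, hx⟩ := Stmt6Aux.exists_eigen
        (R.toLinearEquiv : EuclideanSpace ℝ (Fin 2) →ₗ[ℝ] EuclideanSpace ℝ (Fin 2)) hRdet
      have hx' : R x = r • x := hx
      have hr : r = 1 ∨ r = -1 := Stmt6Aux.eig_pm R hx0 hx'
      obtain ⟨y, d, hy0, hxy, hRy, hdet_eq⟩ := Stmt6Aux.exists_orth_eigen R hx0 hx'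
      have hrd : r * d = -1 := by rw [← hdet_eq]; exact hRdet
      obtain ⟨p, q, hp0, hq0, hpq, hRp, hRq⟩ :
          ∃ p q : EuclideanSpace ℝ (Fin 2), p ≠ 0 ∧ q ≠ 0 ∧ ⟪p, q⟫_ℝ = 0 ∧
            R p = p ∧ R q = -q := by
        rcases hr with h | h
        · refine ⟨x, y, hx0, hy0, hxy, by rw [hx', h, one_smul], ?_⟩
          have hd : d = -1 := by rw [h] at hrd; linarith
          rw [hRy, hd, neg_smul, one_smul]
        · refine ⟨y, x, hy0, hx0, by rw [real_inner_comm]; exact hxy, ?_, ?_⟩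
          · have hd : d = 1 := by rw [h] at hrd; linarith
            rw [hRy, hd, one_smul]
          · rw [hx', h, neg_smul, one_smul]
      have hpn : ‖p‖ ≠ 0 := norm_ne_zero_iff.2 hp0
      have hqn : ‖q‖ ≠ 0 := norm_ne_zero_iff.2 hq0
      set v : EuclideanSpace ℝ (Fin 2) := ‖p‖⁻¹ • p with hvdef
      set w : EuclideanSpace ℝ (Fin 2) := ‖q‖⁻¹ • q with hwdef
      have hvn : ‖v‖ = 1 := by
        rw [hvdef, norm_smul, norm_inv, norm_norm, inv_mul_cancel₀ hpn]
      have hwn : ‖w‖ = 1 := by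
        rw [hwdef, norm_smul, norm_inv, norm_norm, inv_mul_cancel₀ hqn]
      have hvw : ⟪v, w⟫_ℝ = 0 := by
        rw [hvdef, hwdef, real_inner_smul_left, real_inner_smul_right, hpq]
        ring
      have hRv : R v = v := by rw [hvdef, _root_.map_smul, hRp]
      have hRw : R w = -w := by rw [hwdef, _root_.map_smul, hRq, smul_neg]
      apply Stmt6Aux.not_complete v w hvn hwn hvw
      intro T hTG
      rcases Stmt6Aux.det_pm T with hdT | hdT
      · rcases hG T hTG hdT with rfl | rfl
        · exact ⟨1, 1, by simp, by simp⟩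
        · exact ⟨-1, -1, by simp, by simp⟩
      · have hdR' : Stmt6Aux.detI R⁻¹ = -1 := by
          have h := Stmt6Aux.det_inv R
          rw [hRdet] at h; linarith
        have hdU : Stmt6Aux.detI (T * R⁻¹) = 1 := by
          rw [Stmt6Aux.det_mul, hdT, hdR']; norm_num
        rcases hG (T * R⁻¹) (mul_mem hTG (inv_mem hRG)) hdU with hU | hU
        · have hTR : T = LinearIsometryEquiv.refl ℝ (EuclideanSpace ℝ (Fin 2)) * R := by
            have h := congrArg (fun S => S * R) hU
            simpa [inv_mul_cancel_right] using h
          refine ⟨1, -1, ?_, ?_⟩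
          · rw [hTR]
            simp [LinearIsometryEquiv.coe_mul, hRv]
          · rw [hTR]
            simp [LinearIsometryEquiv.coe_mul, hRw]
        · have hTR : T = LinearIsometryEquiv.neg ℝ * R := by
            have h := congrArg (fun S => S * R) hU
            simpa [inv_mul_cancel_right] using h
          refine ⟨-1, 1, ?_, ?_⟩
          · rw [hTR]
            simp [LinearIsometryEquiv.coe_mul, LinearIsometryEquiv.coe_neg, hRv]
          · rw [hTR]
            simp [LinearIsometryEquiv.coe_mul, LinearIsometryEquiv.coe_neg, hRw]
    · push_neg at href
      have h01 : ⟪(EuclideanSpace.single 0 1 : EuclideanSpace ℝ (Fin 2)),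
          EuclideanSpace.single 1 1⟫_ℝ = 0 := by
        rw [EuclideanSpace.inner_single_left]
        simp [EuclideanSpace.single_apply]
      apply Stmt6Aux.not_complete (EuclideanSpace.single 0 1) (EuclideanSpace.single 1 1)
        (by simp [EuclideanSpace.norm_single]) (by simp [EuclideanSpace.norm_single]) h01
      intro T hTG
      rcases Stmt6Aux.det_pm T with hdT | hdT
      · rcases hG T hTG hdT with rfl | rfl
        · exact ⟨1, 1, by simp, by simp⟩
        · exact ⟨-1, -1, by simp, by simp⟩
      · exact absurd hdT (href T hTG)
end
end

section
/- Let f : S^{n-1} → [0,∞) be integrable and completely symmetric. Then f is isotropic, i.e. ∫_{S^{n-1}} x f(x) dx = 0 and the map u ↦ ∫_{S^{n-1}} ⟨x,u⟩² f(x) dx is constant on S^{n-1}. -/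
open MeasureTheory
open scoped InnerProductSpace ENNReal

noncomputable section

variable {F : Type*} [NormedAddCommGroup F] [InnerProductSpace ℝ F]

section AuxLemmas

variable {E : Type*} [NormedAddCommGroup E] [InnerProductSpace ℝ E]

private lemma aux_selfadj_eq_smul (A : E →ₗ[ℝ] E) (r : ℝ) (hr : 0 < r)
    (hsym : ∀ x y : E, ⟪A x, y⟫_ℝ = ⟪x, A y⟫_ℝ)
    (hpos : ∀ x : E, ‖x‖ ^ 2 ≤ ⟪A x, x⟫_ℝ)
    (hnorm : ∀ x : E, ‖A x‖ = r * ‖x‖) (x : E) : A x = r • x := by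
  have hAA : ∀ z : E, A (A z) = (r ^ 2) • z := by
    intro z
    apply ext_inner_right ℝ
    intro w
    have h1 : ⟪A (A z), w⟫_ℝ = ⟪A z, A w⟫_ℝ := by rw [hsym]
    have h2 : ⟪A z, A w⟫_ℝ = r ^ 2 * ⟪z, w⟫_ℝ := by
      rw [real_inner_eq_norm_add_mul_self_sub_norm_mul_self_sub_norm_mul_self_div_two (A z) (A w),
        real_inner_eq_norm_add_mul_self_sub_norm_mul_self_sub_norm_mul_self_div_two z w,
        ← map_add, hnorm, hnorm, hnorm]
      ring
    rw [h1, h2, real_inner_smul_left]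
  set w : E := A x - r • x with hw
  have key : A w + r • w = 0 := by
    rw [hw, map_sub, A.map_smul, hAA, smul_sub, smul_smul, ← sq]
    abel
  have h1 : ⟪A w, w⟫_ℝ + r * ‖w‖ ^ 2 = 0 := by
    have h := congrArg (fun z : E => ⟪z, w⟫_ℝ) key
    simpa [inner_add_left, real_inner_smul_left, real_inner_self_eq_norm_sq] using h
  have h2 : ‖w‖ ^ 2 ≤ ⟪A w, w⟫_ℝ := hpos w
  have hwn : ‖w‖ = 0 := by nlinarith [sq_nonneg ‖w‖, norm_nonneg w]
  have hw0 : A x - r • x = 0 := by rw [← hw]; exact norm_eq_zero.mp hwn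
  exact sub_eq_zero.mp hw0

private lemma aux_norm_of_image_ball (A : E ≃ₗ[ℝ] E) (r : ℝ) (hr : 0 < r)
    (h : ⇑A '' Metric.closedBall 0 1 = Metric.closedBall (0 : E) r) (x : E) :
    ‖A x‖ = r * ‖x‖ := by
  rcases eq_or_ne x 0 with rfl | hx
  · simp
  have hxn : (0:ℝ) < ‖x‖ := norm_pos_iff.2 hx
  have hAx0 : A x ≠ 0 := fun h0 => hx ((LinearEquiv.map_eq_zero_iff A).mp h0)
  have hAxn : (0:ℝ) < ‖A x‖ := norm_pos_iff.2 hAx0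
  have hup : ‖A x‖ ≤ r * ‖x‖ := by
    have hu : (‖x‖⁻¹ • x) ∈ Metric.closedBall (0:E) 1 := by
      simp [norm_smul, abs_of_nonneg (inv_nonneg.2 hxn.le), inv_mul_cancel₀ hxn.ne']
    have hmem : A (‖x‖⁻¹ • x) ∈ Metric.closedBall (0:E) r := by
      rw [← h]; exact Set.mem_image_of_mem _ hu
    rw [Metric.mem_closedBall, dist_zero_right, A.map_smul, norm_smul, norm_inv,
      norm_norm] at hmem
    calc ‖A x‖ = ‖x‖ * (‖x‖⁻¹ * ‖A x‖) := by field_simp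
    _ ≤ ‖x‖ * r := by nlinarith
    _ = r * ‖x‖ := mul_comm _ _
  have hlow : r * ‖x‖ ≤ ‖A x‖ := by
    have hymem : (r / ‖A x‖) • A x ∈ Metric.closedBall (0:E) r := by
      rw [Metric.mem_closedBall, dist_zero_right, norm_smul, Real.norm_eq_abs,
        abs_of_nonneg (div_nonneg hr.le hAxn.le), div_mul_cancel₀ _ hAxn.ne']
    rw [← h] at hymem
    obtain ⟨z, hz1, hz2⟩ := hymem
    have hz : z = (r / ‖A x‖) • x := by
      apply A.injective
      rw [hz2, A.map_smul]
    have hz1' : ‖z‖ ≤ 1 := by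
      rw [Metric.mem_closedBall, dist_zero_right] at hz1; exact hz1
    rw [hz, norm_smul, Real.norm_eq_abs, abs_of_nonneg (div_nonneg hr.le hAxn.le),
      div_mul_eq_mul_div, div_le_one hAxn] at hz1'
    exact hz1'
  exact le_antisymm hup hlow

end AuxLemmas

section MeasAux

variable {E : Type*} [NormedAddCommGroup E] [InnerProductSpace ℝ E]
  [MeasurableSpace E] [BorelSpace E] [SecondCountableTopology E]

private lemma aux_integrable_smul {V : Type*} [NormedAddCommGroup V] [NormedSpace ℝ V]
    {f : E → ℝ} {d : ℝ}
    (hint : IntegrableOn f (Metric.sphere 0 1) μH[d])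
    {g : E → V} (hg : Continuous g) {C : ℝ}
    (hC : ∀ y ∈ Metric.sphere (0:E) 1, ‖g y‖ ≤ C) :
    Integrable (fun y => f y • g y) (μH[d].restrict (Metric.sphere (0:E) 1)) :=
  hint.smul_of_top_left (memLp_top_of_bound hg.aestronglyMeasurable C
    ((ae_restrict_iff' Metric.isClosed_sphere.measurableSet).2 (Filter.Eventually.of_forall hC)))

private lemma aux_integral_comp {V : Type*} [NormedAddCommGroup V] [NormedSpace ℝ V]
    (d : ℝ) (T : E ≃ₗᵢ[ℝ] E) (g : E → V) :
    (∫ y in Metric.sphere (0:E) 1, g (T y) ∂μH[d])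
      = ∫ y in Metric.sphere (0:E) 1, g y ∂μH[d] := by
  have hmp : MeasurePreserving T (μH[d] : Measure E) μH[d] :=
    T.toIsometryEquiv.measurePreserving_hausdorffMeasure d
  have hpre : (T : E → E) ⁻¹' Metric.sphere 0 1 = Metric.sphere 0 1 := by
    ext z
    simp [mem_sphere_iff_norm]
  have hSm : MeasurableSet (Metric.sphere (0:E) 1) := Metric.isClosed_sphere.measurableSet
  have hrp := hmp.restrict_preimage (s := Metric.sphere (0:E) 1) hSm
  rw [hpre] at hrp
  exact hrp.integral_comp T.toHomeomorph.measurableEmbedding g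

end MeasAux

private lemma aux_main {E : Type*} [NormedAddCommGroup E] [InnerProductSpace ℝ E]
    [MeasurableSpace E] [BorelSpace E] [SecondCountableTopology E] [FiniteDimensional ℝ E]
    (d : ℝ) (f : E → ℝ)
    (hint : IntegrableOn f (Metric.sphere 0 1) (μH[d] : Measure E))
    (hnonneg : ∀ x, 0 ≤ f x)
    (hcs : CompletelySymmetricFun f d) :
    IsotropicOnSphere f d := by
  classical
  set S : Set E := Metric.sphere 0 1 with hS
  have hSmeas : MeasurableSet S := Metric.isClosed_sphere.measurableSet
  -- scalar integrability
  have intS : ∀ u w : E, Integrable (fun y => f y * (⟪u, y⟫_ℝ * ⟪y, w⟫_ℝ))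
      (μH[d].restrict S) := by
    intro u w
    have hg : Continuous fun y : E => ⟪u, y⟫_ℝ * ⟪y, w⟫_ℝ :=
      (continuous_const.inner continuous_id).mul (continuous_id.inner continuous_const)
    have hb : ∀ y ∈ Metric.sphere (0:E) 1, ‖⟪u, y⟫_ℝ * ⟪y, w⟫_ℝ‖ ≤ ‖u‖ * ‖w‖ := by
      intro y hy
      have hy1 : ‖y‖ = 1 := by simpa using hy
      have h1 := abs_real_inner_le_norm u y
      have h2 := abs_real_inner_le_norm y w
      rw [hy1, mul_one] at h1
      rw [hy1, one_mul] at h2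
      rw [Real.norm_eq_abs, abs_mul]
      exact mul_le_mul h1 h2 (abs_nonneg _) (norm_nonneg _)
    simpa [smul_eq_mul] using aux_integrable_smul hint hg hb
  -- vector integrability
  have intV : ∀ u : E, Integrable (fun y => f y • (⟪u, y⟫_ℝ • y)) (μH[d].restrict S) := by
    intro u
    have hg : Continuous fun y : E => ⟪u, y⟫_ℝ • y :=
      (continuous_const.inner continuous_id).smul continuous_id
    refine aux_integrable_smul hint hg (C := ‖u‖) ?_
    intro y hy
    have hy1 : ‖y‖ = 1 := by simpa using hy
    have h1 := abs_real_inner_le_norm u y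
    rw [hy1, mul_one] at h1
    rw [norm_smul, Real.norm_eq_abs, hy1, mul_one]
    exact h1
  -- the moment operator
  set M : E → E := fun u => ∫ y in S, f y • (⟪u, y⟫_ℝ • y) ∂μH[d] with hMdef
  have hMinner : ∀ u w : E, ⟪M u, w⟫_ℝ = ∫ y in S, f y * (⟪u, y⟫_ℝ * ⟪y, w⟫_ℝ) ∂μH[d] := by
    intro u w
    rw [real_inner_comm, hMdef]
    rw [← integral_inner (intV u) w]
    refine integral_congr_ae (Filter.Eventually.of_forall fun y => ?_)
    simp only [real_inner_smul_right, real_inner_comm w y]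
  have hMadd : ∀ u v : E, M (u + v) = M u + M v := by
    intro u v
    apply ext_inner_right ℝ
    intro w
    rw [hMinner, inner_add_left, hMinner, hMinner, ← integral_add (intS u w) (intS v w)]
    refine integral_congr_ae (Filter.Eventually.of_forall fun y => ?_)
    simp only [inner_add_left]
    ring
  have hMsmul : ∀ (c : ℝ) (u : E), M (c • u) = c • M u := by
    intro c u
    apply ext_inner_right ℝ
    intro w
    rw [hMinner, real_inner_smul_left, hMinner, ← integral_const_mul]
    refine integral_congr_ae (Filter.Eventually.of_forall fun y => ?_)
    simp only [real_inner_smul_left]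
    ring
  set Mlin : E →ₗ[ℝ] E := { toFun := M, map_add' := hMadd, map_smul' := hMsmul } with hMlin
  set A : E →ₗ[ℝ] E := LinearMap.id + Mlin with hA
  have hAapp : ∀ x : E, A x = x + M x := fun x => rfl
  have hsym : ∀ x y : E, ⟪A x, y⟫_ℝ = ⟪x, A y⟫_ℝ := by
    intro x y
    rw [hAapp, hAapp, inner_add_left, inner_add_right]
    congr 1
    have hMx : (⟪M x, y⟫_ℝ : ℝ) = ⟪M y, x⟫_ℝ := by
      rw [hMinner, hMinner]
      refine integral_congr_ae (Filter.Eventually.of_forall fun z => ?_)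
      simp only [real_inner_comm z y, real_inner_comm z x]
      ring
    rw [hMx, real_inner_comm]
  have hpos : ∀ x : E, ‖x‖ ^ 2 ≤ ⟪A x, x⟫_ℝ := by
    intro x
    rw [hAapp, inner_add_left, real_inner_self_eq_norm_sq]
    have : (0:ℝ) ≤ ⟪M x, x⟫_ℝ := by
      rw [hMinner]
      refine integral_nonneg fun z => ?_
      simp only [real_inner_comm z x]
      exact mul_nonneg (hnonneg z) (mul_self_nonneg _)
    linarith
  have hinj : Function.Injective A := by
    refine (injective_iff_map_eq_zero A).2 fun z hz => ?_
    have h := hpos z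
    rw [hz, inner_zero_left] at h
    have : ‖z‖ = 0 := by nlinarith [sq_nonneg ‖z‖, norm_nonneg z]
    exact norm_eq_zero.mp this
  have hsurj : Function.Surjective A := LinearMap.injective_iff_surjective.mp hinj
  set Aeq : E ≃ₗ[ℝ] E := LinearEquiv.ofBijective A ⟨hinj, hsurj⟩ with hAeq
  have hAeqapp : ∀ x : E, Aeq x = A x := fun x => rfl
  -- equivariance
  have hequiv : ∀ T : E ≃ₗᵢ[ℝ] E, (∀ x ∈ S, f (T x) = f x) → ∀ u : E, M (T u) = T (M u) := by
    intro T hT u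
    apply ext_inner_right ℝ
    intro v
    rw [hMinner]
    rw [← aux_integral_comp d T (fun y => f y * (⟪T u, y⟫_ℝ * ⟪y, v⟫_ℝ))]
    have hTv : ∀ z : E, ⟪T z, v⟫_ℝ = ⟪z, T.symm v⟫_ℝ := by
      intro z
      conv_lhs => rw [← T.apply_symm_apply v]
      rw [T.inner_map_map]
    have heq : ∀ z ∈ S, f (T z) * (⟪T u, T z⟫_ℝ * ⟪T z, v⟫_ℝ)
        = f z * (⟪u, z⟫_ℝ * ⟪z, T.symm v⟫_ℝ) := by
      intro z hz
      rw [hT z hz, T.inner_map_map, hTv]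
    rw [setIntegral_congr_fun hSmeas heq, ← hMinner]
    conv_rhs => rw [← T.apply_symm_apply v, T.inner_map_map]
  -- invariant ellipsoid must be a ball
  obtain ⟨r, hr, hball⟩ :=
    hcs.2 (⇑Aeq '' Metric.closedBall 0 1) ⟨Aeq, rfl⟩ (by
      intro T hT
      have hT' : ∀ x ∈ S, f (T x) = f x := hT
      have hAT : ∀ z : E, Aeq (T z) = T (Aeq z) := by
        intro z
        rw [hAeqapp, hAeqapp, hAapp, hAapp, hequiv T hT' z, map_add]
      have hTB : ⇑T '' Metric.closedBall 0 1 = Metric.closedBall (0:E) 1 := by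
        have := T.toIsometryEquiv.image_closedBall (0:E) 1
        simpa using this
      calc ⇑T '' (⇑Aeq '' Metric.closedBall 0 1)
          = (fun z => T (Aeq z)) '' Metric.closedBall 0 1 := Set.image_image _ _ _
        _ = (fun z => Aeq (T z)) '' Metric.closedBall 0 1 := by
            exact congrArg (· '' Metric.closedBall 0 1) (funext fun z => (hAT z).symm)
        _ = ⇑Aeq '' (⇑T '' Metric.closedBall 0 1) := (Set.image_image _ _ _).symm
        _ = ⇑Aeq '' Metric.closedBall 0 1 := by rw [hTB])
  have hnormA : ∀ x : E, ‖A x‖ = r * ‖x‖ := fun x =>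
    aux_norm_of_image_ball Aeq r hr hball x
  have hAx : ∀ x : E, A x = r • x := fun x =>
    aux_selfadj_eq_smul A r hr hsym hpos hnormA x
  -- conclude
  refine ⟨hcs.1, r - 1, ?_⟩
  intro x hx
  have hx1 : ‖x‖ = 1 := by simpa using hx
  have e1 : (∫ y in S, f y * ⟪x, y⟫_ℝ ^ 2 ∂μH[d]) = ⟪M x, x⟫_ℝ := by
    rw [hMinner]
    refine integral_congr_ae (Filter.Eventually.of_forall fun y => ?_)
    simp only [real_inner_comm y x]
    ring
  rw [e1]
  have hMx : M x = r • x - x := by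
    have h := hAx x
    rw [hAapp] at h
    rw [← h]
    abel
  rw [hMx, inner_sub_left, real_inner_smul_left, real_inner_self_eq_norm_sq, hx1]
  ring

/-- An integrable, nonnegative, completely symmetric function on
`S^{n-1}` is isotropic. -/
theorem stmt8 (n : ℕ) (f : EuclideanSpace ℝ (Fin n) → ℝ)
    (hint : IntegrableOn f (Metric.sphere 0 1)
      (μH[(n:ℝ)-1] : Measure (EuclideanSpace ℝ (Fin n))))
    (hnonneg : ∀ x, 0 ≤ f x)
    (hcs : CompletelySymmetricFun f ((n:ℝ)-1)) :
    IsotropicOnSphere f ((n:ℝ)-1) :=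
  aux_main ((n:ℝ)-1) f hint hnonneg hcs
end
end

section
/- Let K be an isotropic star body in ℝ^n with centroid at the origin. Then ∫_K |x|² dx = c₂ · B(K)^{1/n}, where B(K) = ∫_K ⋯ ∫_K det(x₁,…,x_n)² dx₁⋯dx_n and c₂ > 0 is a constant depending only on n. -/
open MeasureTheory
open scoped InnerProductSpace ENNReal

noncomputable section

variable {F : Type*} [NormedAddCommGroup F] [InnerProductSpace ℝ F]

/-- The quantity `B(K) = ∫_K ⋯ ∫_K det(x₁,…,x_n)² dx₁⋯dx_n`. -/
def Bquant (n : ℕ) (K : Set (EuclideanSpace ℝ (Fin n))) : ℝ :=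
  ∫ x : Fin n → EuclideanSpace ℝ (Fin n) in Set.univ.pi (fun _ => K),
    (Matrix.det (Matrix.of fun i j => x i j)) ^ 2

section Stmt10Helpers
set_option linter.unusedSectionVars false
variable {α : Type*} [MeasureSpace α] [SigmaFinite (volume : Measure α)]

lemma indicator_pi_prod {n : ℕ} {K : Set α} (f : Fin n → α → ℝ) :
    (Set.univ.pi fun _ : Fin n => K).indicator (fun x => ∏ i, f i (x i))
      = fun x => ∏ i, K.indicator (f i) (x i) := by
  funext x
  by_cases hx : x ∈ Set.univ.pi fun _ : Fin n => K
  · rw [Set.indicator_of_mem hx]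
    exact Finset.prod_congr rfl fun i _ =>
      (Set.indicator_of_mem (hx i (Set.mem_univ i)) _).symm
  · rw [Set.indicator_of_notMem hx]
    obtain ⟨j, hj⟩ : ∃ j, x j ∉ K := by simpa [Set.mem_pi] using hx
    exact (Finset.prod_eq_zero (Finset.mem_univ j) (Set.indicator_of_notMem hj _)).symm

lemma integrableOn_pi_prod {n : ℕ} {K : Set α} (hKm : MeasurableSet K)
    (f : Fin n → α → ℝ) (hf : ∀ i, IntegrableOn (f i) K) :
    IntegrableOn (fun x : Fin n → α => ∏ i, f i (x i))
      (Set.univ.pi fun _ : Fin n => K) := by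
  have hS : MeasurableSet (Set.univ.pi fun _ : Fin n => K) :=
    MeasurableSet.univ_pi fun _ => hKm
  exact (integrable_indicator_iff hS).mp (by
    rw [indicator_pi_prod]
    exact Integrable.fintype_prod fun i => (integrable_indicator_iff hKm).mpr (hf i))

lemma integral_pi_restrict {n : ℕ} {K : Set α} (hKm : MeasurableSet K)
    (f : Fin n → α → ℝ) :
    (∫ x : Fin n → α in Set.univ.pi (fun _ => K),
      ∏ i, f i (x i)) = ∏ i, ∫ y in K, f i y := by
  have hS : MeasurableSet (Set.univ.pi fun _ : Fin n => K) :=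
    MeasurableSet.univ_pi fun _ => hKm
  rw [← integral_indicator hS, indicator_pi_prod,
    MeasureTheory.integral_fintype_prod_volume_eq_prod (fun i => K.indicator (f i))]
  exact Finset.prod_congr rfl fun i _ => integral_indicator hKm

lemma det_sq_expand {n : ℕ} (y : Fin n → Fin n → ℝ) :
    (Matrix.det (Matrix.of y)) ^ 2
      = ∑ σ : Equiv.Perm (Fin n), ∑ τ : Equiv.Perm (Fin n),
          (((Equiv.Perm.sign σ : ℤ) : ℝ) * ((Equiv.Perm.sign τ : ℤ) : ℝ))
            * ∏ i, (y i (σ i) * y i (τ i)) := by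
  have h1 : (Matrix.of y).det
      = ∑ σ : Equiv.Perm (Fin n), ((Equiv.Perm.sign σ : ℤ) : ℝ) * ∏ i, y i (σ i) := by
    rw [← Matrix.det_transpose, Matrix.det_apply']
    rfl
  rw [sq, h1, Finset.sum_mul_sum]
  refine Finset.sum_congr rfl fun σ _ => Finset.sum_congr rfl fun τ _ => ?_
  rw [Finset.prod_mul_distrib]
  ring

lemma Bval {n : ℕ} {K : Set α} (hKm : MeasurableSet K) (w : Fin n → α → ℝ)
    (hint : ∀ i j : Fin n, IntegrableOn (fun x => w i x * w j x) K volume)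
    {c : ℝ}
    (hdiag : ∀ i : Fin n, (∫ x in K, w i x * w i x) = c)
    (hoff : ∀ i j : Fin n, i ≠ j → (∫ x in K, w i x * w j x) = 0) :
    (∫ x : Fin n → α in Set.univ.pi (fun _ => K),
        (Matrix.det (Matrix.of fun i j => w j (x i))) ^ 2)
      = (n.factorial : ℝ) * c ^ n := by
  have hSm : MeasurableSet (Set.univ.pi fun _ : Fin n => K) :=
    MeasurableSet.univ_pi fun _ => hKm
  have hintS : ∀ σ τ : Equiv.Perm (Fin n), IntegrableOn
      (fun x : Fin n → α => (((Equiv.Perm.sign σ : ℤ) : ℝ) * ((Equiv.Perm.sign τ : ℤ) : ℝ))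
        * ∏ i, (w (σ i) (x i) * w (τ i) (x i))) (Set.univ.pi fun _ : Fin n => K) volume :=
    fun σ τ => (integrableOn_pi_prod hKm (fun i y => w (σ i) y * w (τ i) y)
      fun i => hint (σ i) (τ i)).const_mul _
  calc (∫ x : Fin n → α in Set.univ.pi (fun _ => K),
          (Matrix.det (Matrix.of fun i j => w j (x i))) ^ 2)
      = ∫ x : Fin n → α in Set.univ.pi (fun _ => K),
          ∑ σ : Equiv.Perm (Fin n), ∑ τ : Equiv.Perm (Fin n),
            (((Equiv.Perm.sign σ : ℤ) : ℝ) * ((Equiv.Perm.sign τ : ℤ) : ℝ))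
              * ∏ i, (w (σ i) (x i) * w (τ i) (x i)) :=
        setIntegral_congr_fun hSm fun x _ => det_sq_expand (fun i j => w j (x i))
    _ = ∑ σ : Equiv.Perm (Fin n), ∫ x : Fin n → α in Set.univ.pi (fun _ => K),
          ∑ τ : Equiv.Perm (Fin n),
            (((Equiv.Perm.sign σ : ℤ) : ℝ) * ((Equiv.Perm.sign τ : ℤ) : ℝ))
              * ∏ i, (w (σ i) (x i) * w (τ i) (x i)) :=
        integral_finset_sum (f := fun σ (x : Fin n → α) => ∑ τ : Equiv.Perm (Fin n),
            (((Equiv.Perm.sign σ : ℤ) : ℝ) * ((Equiv.Perm.sign τ : ℤ) : ℝ))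
              * ∏ i, (w (σ i) (x i) * w (τ i) (x i))) Finset.univ
          (fun σ _ => integrable_finset_sum _ fun τ _ => hintS σ τ)
    _ = ∑ σ : Equiv.Perm (Fin n), ∑ τ : Equiv.Perm (Fin n),
          ∫ x : Fin n → α in Set.univ.pi (fun _ => K),
            (((Equiv.Perm.sign σ : ℤ) : ℝ) * ((Equiv.Perm.sign τ : ℤ) : ℝ))
              * ∏ i, (w (σ i) (x i) * w (τ i) (x i)) :=
        Finset.sum_congr rfl fun σ _ =>
          integral_finset_sum (f := fun τ (x : Fin n → α) =>
            (((Equiv.Perm.sign σ : ℤ) : ℝ) * ((Equiv.Perm.sign τ : ℤ) : ℝ))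
              * ∏ i, (w (σ i) (x i) * w (τ i) (x i))) Finset.univ
            (fun τ _ => hintS σ τ)
    _ = ∑ σ : Equiv.Perm (Fin n), ∑ τ : Equiv.Perm (Fin n),
          (((Equiv.Perm.sign σ : ℤ) : ℝ) * ((Equiv.Perm.sign τ : ℤ) : ℝ))
            * ∫ x : Fin n → α in Set.univ.pi (fun _ => K),
                ∏ i, (w (σ i) (x i) * w (τ i) (x i)) :=
        Finset.sum_congr rfl fun σ _ => Finset.sum_congr rfl fun τ _ =>
          MeasureTheory.integral_const_mul _ _
    _ = ∑ σ : Equiv.Perm (Fin n), ∑ τ : Equiv.Perm (Fin n),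
          (((Equiv.Perm.sign σ : ℤ) : ℝ) * ((Equiv.Perm.sign τ : ℤ) : ℝ))
            * ∏ i, ∫ x in K, w (σ i) x * w (τ i) x :=
        Finset.sum_congr rfl fun σ _ => Finset.sum_congr rfl fun τ _ =>
          congrArg _ (integral_pi_restrict hKm (fun i y => w (σ i) y * w (τ i) y))
    _ = ∑ σ : Equiv.Perm (Fin n), ∑ τ : Equiv.Perm (Fin n),
          (((Equiv.Perm.sign σ : ℤ) : ℝ) * ((Equiv.Perm.sign τ : ℤ) : ℝ))
            * (if σ = τ then c ^ n else 0) := by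
        refine Finset.sum_congr rfl fun σ _ => Finset.sum_congr rfl fun τ _ => ?_
        congr 1
        by_cases h : σ = τ
        · subst h
          rw [if_pos rfl]
          calc (∏ i : Fin n, ∫ x in K, w (σ i) x * w (σ i) x) = ∏ _i : Fin n, c :=
                Finset.prod_congr rfl fun i _ => hdiag (σ i)
            _ = c ^ n := by rw [Finset.prod_const, Finset.card_univ, Fintype.card_fin]
        · obtain ⟨i, hi⟩ : ∃ i, σ i ≠ τ i := by
            by_contra hcon; push_neg at hcon; exact h (Equiv.ext hcon)
          rw [if_neg h]
          exact Finset.prod_eq_zero (Finset.mem_univ i) (hoff _ _ hi)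
    _ = ∑ σ : Equiv.Perm (Fin n), c ^ n := by
        refine Finset.sum_congr rfl fun σ _ => ?_
        rw [Finset.sum_eq_single σ]
        · rw [if_pos rfl]
          have h1 : ((Equiv.Perm.sign σ : ℤ) : ℝ) * ((Equiv.Perm.sign σ : ℤ) : ℝ) = 1 := by
            rw [← Int.cast_mul, ← Units.val_mul, Int.units_mul_self]
            norm_num
          rw [h1, one_mul]
        · intro τ _ hτ
          rw [if_neg (Ne.symm hτ), mul_zero]
        · intro h
          exact absurd (Finset.mem_univ σ) h
    _ = (n.factorial : ℝ) * c ^ n := by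
        rw [Finset.sum_const, Finset.card_univ, Fintype.card_perm, Fintype.card_fin,
          nsmul_eq_mul]


end Stmt10Helpers

lemma combo_mem_sphere {n : ℕ} {i j : Fin n} (hij : i ≠ j) (ε : ℝ) (hε : ε = 1 ∨ ε = -1) :
    (Real.sqrt 2)⁻¹ • (EuclideanSpace.single i (1:ℝ) + EuclideanSpace.single j ε)
      ∈ Metric.sphere (0 : EuclideanSpace ℝ (Fin n)) 1 := by
  rw [mem_sphere_zero_iff_norm, norm_smul]
  have hinner : ⟪EuclideanSpace.single i (1:ℝ), EuclideanSpace.single j ε⟫_ℝ = 0 := by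
    rw [EuclideanSpace.inner_single_right]
    simp [EuclideanSpace.single_apply, hij.symm]
  have hsq : ‖EuclideanSpace.single i (1:ℝ) + EuclideanSpace.single j ε‖ ^ 2 = 2 := by
    rw [norm_add_sq_real, hinner, EuclideanSpace.norm_single, EuclideanSpace.norm_single]
    rcases hε with h | h <;> simp [h] <;> norm_num
  have hnn : ‖EuclideanSpace.single i (1:ℝ) + EuclideanSpace.single j ε‖ = Real.sqrt 2 := by
    rw [← Real.sqrt_sq (norm_nonneg _), hsq]
  rw [hnn, Real.norm_eq_abs, abs_of_nonneg (by positivity)]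
  rw [inv_mul_cancel₀ (by positivity)]

lemma inner_combo {n : ℕ} (i j : Fin n) (ε : ℝ) (x : EuclideanSpace ℝ (Fin n)) :
    ⟪x, (Real.sqrt 2)⁻¹ • (EuclideanSpace.single i (1:ℝ) + EuclideanSpace.single j ε)⟫_ℝ
      = (Real.sqrt 2)⁻¹ * (x i + ε * x j) := by
  rw [inner_smul_right, inner_add_right, EuclideanSpace.inner_single_right,
    EuclideanSpace.inner_single_right]
  simp [mul_comm]

/-- For an isotropic star body `K` with centroid at the origin,
`∫_K |x|² dx = c₂ B(K)^{1/n}` for a dimensional constant `c₂ > 0`. -/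
theorem stmt10 (n : ℕ) (hn : 1 ≤ n) :
    ∃ c₂ : ℝ, 0 < c₂ ∧ ∀ K : Set (EuclideanSpace ℝ (Fin n)),
      IsStarBody K → (∫ x in K, x) = 0 →
      (∃ c : ℝ, ∀ y ∈ Metric.sphere (0 : EuclideanSpace ℝ (Fin n)) 1,
        (∫ x in K, ⟪x, y⟫_ℝ ^ 2) = c) →
      (∫ x in K, ‖x‖ ^ 2) = c₂ * Bquant n K ^ ((1:ℝ)/n) := by
  have hn' : (n:ℝ) ≠ 0 := Nat.cast_ne_zero.mpr (by omega)
  refine ⟨n / (n.factorial : ℝ) ^ ((1:ℝ)/n), ?_, ?_⟩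
  · exact div_pos (by exact_mod_cast by omega)
      (Real.rpow_pos_of_pos (by exact_mod_cast n.factorial_pos) _)
  rintro K hK - ⟨c, hc⟩
  have hKc : IsCompact K := hK.1
  have hKm : MeasurableSet K := hKc.isClosed.measurableSet
  have hcont : ∀ i : Fin n, Continuous fun x : EuclideanSpace ℝ (Fin n) => x i := by
    intro i
    exact (EuclideanSpace.proj (𝕜 := ℝ) (ι := Fin n) i).continuous
  have hint : ∀ i j : Fin n,
      IntegrableOn (fun x : EuclideanSpace ℝ (Fin n) => x i * x j) K volume :=
    fun i j => (((hcont i).mul (hcont j)).continuousOn).integrableOn_compact hKc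
  -- diagonal second moments
  have hdiag : ∀ i : Fin n, (∫ x in K, x i * x i) = c := by
    intro i
    have hmem : EuclideanSpace.single i (1:ℝ)
        ∈ Metric.sphere (0 : EuclideanSpace ℝ (Fin n)) 1 := by
      rw [mem_sphere_zero_iff_norm, EuclideanSpace.norm_single]; norm_num
    rw [← hc _ hmem]
    refine setIntegral_congr_fun hKm fun x _ => ?_
    rw [EuclideanSpace.inner_single_right]
    simp [sq]
  -- off-diagonal second moments
  have hoff : ∀ i j : Fin n, i ≠ j → (∫ x in K, x i * x j) = 0 := by
    intro i j hij
    have h1 := hc _ (combo_mem_sphere hij 1 (Or.inl rfl))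
    have h2 := hc _ (combo_mem_sphere hij (-1) (Or.inr rfl))
    have e1 : (∫ x in K, ((Real.sqrt 2)⁻¹ * (x i + 1 * x j)) ^ 2) = c := by
      rw [← h1]; exact setIntegral_congr_fun hKm fun x _ => by rw [inner_combo]
    have e2 : (∫ x in K, ((Real.sqrt 2)⁻¹ * (x i + (-1) * x j)) ^ 2) = c := by
      rw [← h2]; exact setIntegral_congr_fun hKm fun x _ => by rw [inner_combo]
    have int1 : IntegrableOn
        (fun x : EuclideanSpace ℝ (Fin n) =>
          ((Real.sqrt 2)⁻¹ * (x i + 1 * x j)) ^ 2) K volume :=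
      ((((continuous_const.mul ((hcont i).add
        (continuous_const.mul (hcont j)))).pow 2)).continuousOn).integrableOn_compact hKc
    have int2 : IntegrableOn
        (fun x : EuclideanSpace ℝ (Fin n) =>
          ((Real.sqrt 2)⁻¹ * (x i + (-1) * x j)) ^ 2) K volume :=
      ((((continuous_const.mul ((hcont i).add
        (continuous_const.mul (hcont j)))).pow 2)).continuousOn).integrableOn_compact hKc
    have hdiff : (∫ x in K, (((Real.sqrt 2)⁻¹ * (x i + 1 * x j)) ^ 2
        - ((Real.sqrt 2)⁻¹ * (x i + (-1) * x j)) ^ 2)) = 0 := by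
      rw [integral_sub int1 int2, e1, e2, sub_self]
    have hs : ((Real.sqrt 2)⁻¹) ^ 2 = (2:ℝ)⁻¹ := by
      rw [inv_pow, Real.sq_sqrt (by norm_num : (0:ℝ) ≤ 2)]
    have key : (∫ x in K, 2 * (x i * x j)) = 0 := by
      rw [← hdiff]
      refine setIntegral_congr_fun hKm fun x _ => ?_
      rw [mul_pow, mul_pow, hs]; ring
    have h2M : (2:ℝ) * ∫ x in K, x i * x j = 0 := by
      rw [← MeasureTheory.integral_const_mul]
      exact key
    linarith
  have hc0 : 0 ≤ c := by
    rw [← hdiag ⟨0, by omega⟩]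
    exact setIntegral_nonneg hKm fun x _ => mul_self_nonneg _
  -- the norm integral
  have hnormval : (∫ x in K, ‖x‖ ^ 2) = n * c := by
    have hptw : ∀ x : EuclideanSpace ℝ (Fin n), ‖x‖ ^ 2 = ∑ i, x i * x i := by
      intro x
      rw [← real_inner_self_eq_norm_sq, PiLp.inner_apply]
      simp [RCLike.inner_apply, sq]
    calc (∫ x in K, ‖x‖ ^ 2) = ∫ x in K, ∑ i, x i * x i :=
          setIntegral_congr_fun hKm fun x _ => hptw x
      _ = ∑ i : Fin n, ∫ x in K, x i * x i :=
          integral_finset_sum _ fun i _ => hint i i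
      _ = ∑ _i : Fin n, c := Finset.sum_congr rfl fun i _ => hdiag i
      _ = n * c := by rw [Finset.sum_const, Finset.card_univ, Fintype.card_fin, nsmul_eq_mul]
  -- the B quantity
  have hB : Bquant n K = (n.factorial : ℝ) * c ^ n :=
    Bval (α := EuclideanSpace ℝ (Fin n)) hKm (fun j y => y j) hint hdiag hoff
  rw [hnormval, hB]
  have hF : (0:ℝ) < (n.factorial : ℝ) ^ ((1:ℝ)/n) :=
    Real.rpow_pos_of_pos (by exact_mod_cast n.factorial_pos) _
  have hpow : ((n.factorial : ℝ) * c ^ n) ^ ((1:ℝ)/n)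
      = (n.factorial : ℝ) ^ ((1:ℝ)/n) * c := by
    rw [Real.mul_rpow (by positivity) (by positivity)]
    congr 1
    rw [← Real.rpow_natCast c n, ← Real.rpow_mul hc0, mul_one_div, div_self hn',
      Real.rpow_one]
  rw [hpow]
  field_simp
end
end

section
/- For any compact set K ⊂ ℝ^n with positive volume and centroid at the origin, ∫_K |x|² dx ≥ c₂ B(K)^{1/n}, with equality if and only if K is isotropic; here c₂ is the same dimensional constant for which equality holds for isotropic bodies. -/
open MeasureTheory
open scoped InnerProductSpace ENNReal

noncomputable section

variable {F : Type*} [NormedAddCommGroup F] [InnerProductSpace ℝ F]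

namespace Stmt11Helper

open Finset

lemma amgm {n : ℕ} (hn : 1 ≤ n) (l : Fin n → ℝ) (h0 : ∀ i, 0 ≤ l i) :
    (n : ℝ) * (∏ i, l i) ^ ((1:ℝ)/n) ≤ ∑ i, l i := by
  have hn' : (0:ℝ) < n := by exact_mod_cast hn
  have hg := Real.geom_mean_le_arith_mean_weighted Finset.univ (fun _ => 1/(n:ℝ)) l
    (fun i _ => by positivity) (by simp [Finset.card_univ]; field_simp) (fun i _ => h0 i)
  rw [Real.finset_prod_rpow Finset.univ l (fun i _ => h0 i) ((1:ℝ)/n)] at hg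
  calc (n:ℝ) * (∏ i, l i) ^ ((1:ℝ)/n) ≤ (n:ℝ) * ∑ i, (1/(n:ℝ)) * l i :=
        mul_le_mul_of_nonneg_left hg hn'.le
    _ = ∑ i, l i := by rw [Finset.mul_sum]; field_simp

lemma amgm_eq {n : ℕ} (hn : 1 ≤ n) (l : Fin n → ℝ) (h0 : ∀ i, 0 ≤ l i)
    (h : ∑ i, l i = (n : ℝ) * (∏ i, l i) ^ ((1:ℝ)/n)) : ∀ i j, l i = l j := by
  have hn' : (0:ℝ) < n := by exact_mod_cast hn
  by_contra hc
  push_neg at hc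
  obtain ⟨i, j, hij⟩ := hc
  have hne : i ≠ j := fun e => hij (by rw [e])
  by_cases hz : ∃ k, l k = 0
  · obtain ⟨k, hk⟩ := hz
    have hp : ∏ i, l i = 0 := Finset.prod_eq_zero (Finset.mem_univ k) hk
    rw [hp, Real.zero_rpow (by positivity), mul_zero] at h
    have : ∀ k ∈ Finset.univ, l k = 0 :=
      (Finset.sum_eq_zero_iff_of_nonneg (fun k _ => h0 k)).1 h
    exact hij (by rw [this i (Finset.mem_univ i), this j (Finset.mem_univ j)])
  · push_neg at hz
    have hpos : ∀ k, 0 < l k := fun k => (h0 k).lt_of_ne (Ne.symm (hz k))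
    set m : ℝ := (l i + l j)/2 with hm
    have hmpos : 0 < m := by have := hpos i; have := hpos j; rw [hm]; linarith
    set μ : Fin n → ℝ := Function.update (Function.update l i m) j m with hμ
    have h0μ : ∀ k, 0 ≤ μ k := by
      intro k
      rw [hμ, Function.update_apply, Function.update_apply]
      split_ifs <;> first | exact hmpos.le | exact h0 k
    have himem : i ∈ Finset.univ \ {j} := by simp [hne]
    have hls : ∑ k, l k = l j + (l i + ∑ k ∈ (Finset.univ \ {j}) \ {i}, l k) := by
      rw [← Finset.sum_update_of_mem himem (f := l) (b := l i), Function.update_eq_self,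
        ← Finset.sum_update_of_mem (Finset.mem_univ j) (f := l) (b := l j),
        Function.update_eq_self]
    have hsum : ∑ k, μ k = ∑ k, l k := by
      rw [hμ, Finset.sum_update_of_mem (Finset.mem_univ j),
        Finset.sum_update_of_mem himem, hls, hm]
      ring
    have hprod : ∏ k, l k < ∏ k, μ k := by
      rw [hμ, Finset.prod_update_of_mem (Finset.mem_univ j),
        Finset.prod_update_of_mem himem]
      have hl : ∏ k, l k = l j * (l i * ∏ k ∈ (Finset.univ \ {j}) \ {i}, l k) := by
        rw [← Finset.prod_update_of_mem himem (f := l) (b := l i), Function.update_eq_self,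
          ← Finset.prod_update_of_mem (Finset.mem_univ j) (f := l) (b := l j),
          Function.update_eq_self]
      rw [hl]
      have hP : 0 < ∏ k ∈ (Finset.univ \ {j}) \ {i}, l k :=
        Finset.prod_pos (fun k _ => hpos k)
      have hlt : l j * l i < m * m := by
        have hd : 0 < (l i - l j)^2 := by
          have : l i - l j ≠ 0 := sub_ne_zero.2 hij
          positivity
        rw [hm]; nlinarith [hd]
      nlinarith [mul_pos (sub_pos.2 hlt) hP]
    have h1 : (n:ℝ) * (∏ k, l k) ^ ((1:ℝ)/n) < (n:ℝ) * (∏ k, μ k) ^ ((1:ℝ)/n) := by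
      apply mul_lt_mul_of_pos_left _ hn'
      exact Real.rpow_lt_rpow (Finset.prod_nonneg (fun k _ => h0 k)) hprod (by positivity)
    have h2 := amgm hn μ h0μ
    rw [hsum] at h2
    linarith [h, h1, h2]

variable {n : ℕ}

/-- The second moment (covariance-type) matrix of a set. -/
def covM (n : ℕ) (K : Set (EuclideanSpace ℝ (Fin n))) : Matrix (Fin n) (Fin n) ℝ :=
  Matrix.of fun i j => ∫ x in K, x i * x j

lemma cont_coord (i : Fin n) : Continuous fun x : EuclideanSpace ℝ (Fin n) => x i := by
  fun_prop

lemma intg_coord_mul {K : Set (EuclideanSpace ℝ (Fin n))} (hK : IsCompact K) (i j : Fin n) :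
    IntegrableOn (fun x : EuclideanSpace ℝ (Fin n) => x i * x j) K :=
  (((cont_coord i).mul (cont_coord j)).continuousOn).integrableOn_compact hK

lemma inner_eq (x y : EuclideanSpace ℝ (Fin n)) : ⟪x, y⟫_ℝ = ∑ i, x i * y i := by
  simp [PiLp.inner_apply, RCLike.inner_apply, mul_comm]

lemma norm_sq_eq (x : EuclideanSpace ℝ (Fin n)) : ‖x‖ ^ 2 = ∑ i, x i * x i := by
  rw [← real_inner_self_eq_norm_sq, inner_eq]

lemma integral_norm_sq {K : Set (EuclideanSpace ℝ (Fin n))} (hK : IsCompact K) :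
    (∫ x in K, ‖x‖ ^ 2) = (covM n K).trace := by
  simp_rw [norm_sq_eq]
  rw [integral_finset_sum _ (fun i _ => intg_coord_mul hK i i)]
  rfl

/-- The quadratic form attached to a matrix. -/
def Qf (M : Matrix (Fin n) (Fin n) ℝ) (y : EuclideanSpace ℝ (Fin n)) : ℝ :=
  ∑ i, ∑ j, M i j * (y i * y j)

lemma integral_inner_sq {K : Set (EuclideanSpace ℝ (Fin n))} (hK : IsCompact K)
    (y : EuclideanSpace ℝ (Fin n)) :
    (∫ x in K, ⟪x, y⟫_ℝ ^ 2) = Qf (covM n K) y := by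
  have : ∀ x : EuclideanSpace ℝ (Fin n), ⟪x, y⟫_ℝ ^ 2 = ∑ i, ∑ j, (x i * x j) * (y i * y j) := by
    intro x
    rw [inner_eq, sq, Finset.sum_mul_sum]
    exact Finset.sum_congr rfl fun i _ => Finset.sum_congr rfl fun j _ => by ring
  simp_rw [this]
  rw [integral_finset_sum _ (fun i _ => integrable_finset_sum _
    (fun j _ => ((intg_coord_mul hK i j).mul_const _)))]
  refine Finset.sum_congr rfl fun i _ => ?_
  rw [integral_finset_sum _ (fun j _ => ((intg_coord_mul hK i j).mul_const _))]
  refine Finset.sum_congr rfl fun j _ => ?_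
  rw [integral_mul_const]
  rfl

lemma covM_symm {K : Set (EuclideanSpace ℝ (Fin n))} (i j : Fin n) :
    covM n K i j = covM n K j i := by
  simp only [covM, Matrix.of_apply]
  simp_rw [mul_comm]

lemma covM_posSemidef {K : Set (EuclideanSpace ℝ (Fin n))} (hK : IsCompact K) :
    (covM n K).PosSemidef := by
  refine Matrix.posSemidef_iff_dotProduct_mulVec.mpr ⟨?_, ?_⟩
  · ext i j
    simp only [Matrix.conjTranspose_apply, star_trivial]
    exact covM_symm j i
  · intro x
    have hx : ∀ i, ((WithLp.equiv 2 (Fin n → ℝ)).symm x) i = x i := fun i => rfl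
    have key : (0:ℝ) ≤ Qf (covM n K) ((WithLp.equiv 2 (Fin n → ℝ)).symm x) := by
      rw [← integral_inner_sq hK]
      exact integral_nonneg fun z => sq_nonneg _
    have heq : dotProduct (star x) (Matrix.mulVec (covM n K) x) =
        Qf (covM n K) ((WithLp.equiv 2 (Fin n → ℝ)).symm x) := by
      simp only [dotProduct, Matrix.mulVec, Qf, Pi.star_apply, star_trivial,
        Finset.mul_sum]
      refine Finset.sum_congr rfl fun i _ => Finset.sum_congr rfl fun j _ => ?_
      rw [hx i, hx j]
      ring
    rw [heq]
    exact key

lemma Qf_single (M : Matrix (Fin n) (Fin n) ℝ) (i : Fin n) (a : ℝ) :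
    Qf M (EuclideanSpace.single i a) = M i i * (a * a) := by
  simp [Qf, EuclideanSpace.single_apply, mul_ite, ite_mul, mul_zero, zero_mul,
    Finset.sum_ite_eq', Finset.sum_ite_eq]

lemma Qf_double (M : Matrix (Fin n) (Fin n) ℝ) (i j : Fin n) (a : ℝ) :
    Qf M (EuclideanSpace.single i a + EuclideanSpace.single j a) =
      (M i i + M i j + M j i + M j j) * (a * a) := by
  simp only [Qf, PiLp.add_apply, EuclideanSpace.single_apply]
  simp [mul_add, add_mul, mul_ite, ite_mul, mul_zero, zero_mul, Finset.sum_add_distrib,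
    Finset.sum_ite_eq', Finset.sum_ite_eq]
  ring

lemma Qf_smul_one (c : ℝ) (y : EuclideanSpace ℝ (Fin n)) (hy : ‖y‖ = 1) :
    Qf (c • (1 : Matrix (Fin n) (Fin n) ℝ)) y = c := by
  have : ∀ i j : Fin n, (c • (1 : Matrix (Fin n) (Fin n) ℝ)) i j = if j = i then c else 0 := by
    intro i j
    simp [Matrix.smul_apply, Matrix.one_apply, eq_comm]
  simp_rw [Qf, this, ite_mul, zero_mul, Finset.sum_ite_eq', Finset.mem_univ, if_true]
  have h1 : ∑ i, c * (y i * y i) = c * ∑ i, y i * y i := by rw [Finset.mul_sum]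
  rw [h1, ← norm_sq_eq, hy]
  norm_num

lemma sq_inv_sqrt_two : ((Real.sqrt 2)⁻¹ : ℝ) * (Real.sqrt 2)⁻¹ = 2⁻¹ := by
  rw [← mul_inv, Real.mul_self_sqrt (by norm_num)]

lemma sphere_single (i : Fin n) :
    EuclideanSpace.single i (1:ℝ) ∈ Metric.sphere (0 : EuclideanSpace ℝ (Fin n)) 1 := by
  simp [mem_sphere_iff_norm, EuclideanSpace.norm_single]

lemma sphere_double {i j : Fin n} (hij : i ≠ j) :
    EuclideanSpace.single i ((Real.sqrt 2)⁻¹ : ℝ) + EuclideanSpace.single j ((Real.sqrt 2)⁻¹ : ℝ)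
      ∈ Metric.sphere (0 : EuclideanSpace ℝ (Fin n)) 1 := by
  rw [mem_sphere_iff_norm, sub_zero, ← Real.sqrt_one, EuclideanSpace.norm_eq]
  congr 1
  have key : ∀ k, ‖(EuclideanSpace.single i ((Real.sqrt 2)⁻¹ : ℝ) +
      EuclideanSpace.single j ((Real.sqrt 2)⁻¹ : ℝ)) k‖ ^ 2 =
      (if k = i then (2:ℝ)⁻¹ else 0) + (if k = j then (2:ℝ)⁻¹ else 0) := by
    intro k
    simp only [PiLp.add_apply, EuclideanSpace.single_apply, Real.norm_eq_abs, sq_abs]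
    rcases eq_or_ne k i with rfl|hki <;> rcases eq_or_ne k j with rfl|hkj <;>
      simp_all [sq_inv_sqrt_two]
  rw [Finset.sum_congr rfl (fun k _ => key k), Finset.sum_add_distrib]
  simp [Finset.sum_ite_eq']
  norm_num

lemma Qf_const_iff (M : Matrix (Fin n) (Fin n) ℝ) (hsym : ∀ i j, M i j = M j i) :
    (∃ c : ℝ, ∀ y ∈ Metric.sphere (0 : EuclideanSpace ℝ (Fin n)) 1, Qf M y = c) ↔
      ∃ c : ℝ, M = c • (1 : Matrix (Fin n) (Fin n) ℝ) := by
  constructor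
  · rintro ⟨c, hc⟩
    refine ⟨c, ?_⟩
    ext i j
    rcases eq_or_ne i j with rfl | hij
    · have := hc _ (sphere_single i)
      rw [Qf_single] at this
      simp at this
      simp [Matrix.smul_apply, Matrix.one_apply, this]
    · have h1 := hc _ (sphere_double hij)
      rw [Qf_double, sq_inv_sqrt_two] at h1
      have h2 := hc _ (sphere_single i)
      have h3 := hc _ (sphere_single j)
      rw [Qf_single] at h2
      rw [Qf_single] at h3
      simp at h2 h3
      have h4 : M i j = 0 := by
        have := hsym i j
        nlinarith [h1, h2, h3]
      simp [Matrix.smul_apply, Matrix.one_apply, hij, h4]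
  · rintro ⟨c, rfl⟩
    exact ⟨c, fun y hy => Qf_smul_one c y (by simpa [mem_sphere_iff_norm] using hy)⟩

lemma trace_eq_sum_eig {M : Matrix (Fin n) (Fin n) ℝ} (hM : M.IsHermitian) :
    M.trace = ∑ i, hM.eigenvalues i := by
  conv_lhs => rw [hM.spectral_theorem]
  rw [Unitary.conjStarAlgAut_apply, Matrix.trace_mul_cycle,
    (Matrix.mem_unitaryGroup_iff').mp (Matrix.IsHermitian.eigenvectorUnitary hM).2, one_mul,
    Matrix.trace_diagonal]
  simp

lemma eig_const_smul {M : Matrix (Fin n) (Fin n) ℝ} (hM : M.IsHermitian) (c : ℝ)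
    (h : ∀ i, hM.eigenvalues i = c) : M = c • (1 : Matrix (Fin n) (Fin n) ℝ) := by
  have hd : Matrix.diagonal (RCLike.ofReal ∘ hM.eigenvalues) =
      c • (1 : Matrix (Fin n) (Fin n) ℝ) := by
    rw [show (RCLike.ofReal ∘ hM.eigenvalues : Fin n → ℝ) = fun _ => c by
      funext i; simp [h i]]
    rw [← Matrix.smul_one_eq_diagonal]
  conv_lhs => rw [hM.spectral_theorem, hd]
  rw [Unitary.conjStarAlgAut_apply, Matrix.mul_smul, Matrix.smul_mul, Matrix.mul_one,
    (Matrix.mem_unitaryGroup_iff).mp (Matrix.IsHermitian.eigenvectorUnitary hM).2]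

lemma Bquant_eq {K : Set (EuclideanSpace ℝ (Fin n))} (hK : IsCompact K) :
    Bquant n K = (n.factorial : ℝ) * (covM n K).det := by
  classical
  have hKm : MeasurableSet K := hK.measurableSet
  set g : Equiv.Perm (Fin n) → Equiv.Perm (Fin n) → Fin n → EuclideanSpace ℝ (Fin n) → ℝ :=
    fun σ τ i => K.indicator (fun y => y (σ i) * y (τ i)) with hg
  have hgint : ∀ σ τ i, Integrable (g σ τ i) := by
    intro σ τ i
    rw [hg]
    simpa [IntegrableOn, integrable_indicator_iff hKm] using intg_coord_mul hK (σ i) (τ i)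
  have step1 : Bquant n K = ∫ x : Fin n → EuclideanSpace ℝ (Fin n),
      ∑ σ : Equiv.Perm (Fin n), ∑ τ : Equiv.Perm (Fin n),
        ((Equiv.Perm.sign σ : ℤ) : ℝ) * ((Equiv.Perm.sign τ : ℤ) : ℝ) *
          ∏ i, g σ τ i (x i) := by
    rw [Bquant, ← integral_indicator (MeasurableSet.univ_pi (fun _ => hKm))]
    congr 1
    ext x
    by_cases hx : x ∈ Set.univ.pi (fun _ : Fin n => K)
    · rw [Set.indicator_of_mem hx]
      have hdet : (Matrix.det (Matrix.of fun i j => x i j)) =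
          ∑ σ : Equiv.Perm (Fin n), ((Equiv.Perm.sign σ : ℤ) : ℝ) * ∏ i, x i (σ i) := by
        rw [← Matrix.det_transpose, Matrix.det_apply']
        exact Finset.sum_congr rfl fun σ _ => by simp [Matrix.transpose_apply]
      rw [hdet, sq, Finset.sum_mul_sum]
      refine Finset.sum_congr rfl fun σ _ => Finset.sum_congr rfl fun τ _ => ?_
      have hxi : ∀ i, x i ∈ K := fun i => hx i (Set.mem_univ i)
      have : ∀ i, g σ τ i (x i) = x i (σ i) * x i (τ i) := fun i =>
        Set.indicator_of_mem (hxi i) _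
      simp_rw [this]
      rw [Finset.prod_mul_distrib]
      ring
    · rw [Set.indicator_of_notMem hx]
      obtain ⟨i₀, hi₀⟩ := by simpa [Set.mem_pi] using hx
      have : ∀ σ τ : Equiv.Perm (Fin n), ∏ i, g σ τ i (x i) = 0 := by
        intro σ τ
        apply Finset.prod_eq_zero (Finset.mem_univ i₀)
        exact Set.indicator_of_notMem hi₀ _
      simp [this]
  have step2 : Bquant n K = ∑ σ : Equiv.Perm (Fin n), ∑ τ : Equiv.Perm (Fin n),
      ((Equiv.Perm.sign σ : ℤ) : ℝ) * ((Equiv.Perm.sign τ : ℤ) : ℝ) *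
        ∏ i, covM n K (σ i) (τ i) := by
    rw [step1, integral_finset_sum]
    · refine Finset.sum_congr rfl fun σ _ => ?_
      rw [integral_finset_sum]
      · refine Finset.sum_congr rfl fun τ _ => ?_
        rw [integral_const_mul, show (∫ a : Fin n → EuclideanSpace ℝ (Fin n), ∏ i, g σ τ i (a i)) = _ from
          MeasureTheory.integral_fintype_prod_eq_prod (g σ τ)]
        congr 1
        refine Finset.prod_congr rfl fun i _ => ?_
        rw [hg]
        simp only []
        rw [integral_indicator hKm]
        rfl
      · exact fun τ _ => (Integrable.fintype_prod_dep (fun i => hgint σ τ i)).const_mul _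
    · exact fun σ _ => integrable_finset_sum _
        (fun τ _ => (Integrable.fintype_prod_dep (fun i => hgint σ τ i)).const_mul _)
  rw [step2]
  have inner_eq : ∀ σ : Equiv.Perm (Fin n),
      (∑ τ : Equiv.Perm (Fin n), ((Equiv.Perm.sign σ : ℤ) : ℝ) * ((Equiv.Perm.sign τ : ℤ) : ℝ) *
        ∏ i, covM n K (σ i) (τ i)) = (covM n K).det := by
    intro σ
    rw [← Equiv.sum_comp (Equiv.mulRight σ)]
    have key : ∀ ρ : Equiv.Perm (Fin n),
        ((Equiv.Perm.sign σ : ℤ) : ℝ) * ((Equiv.Perm.sign (ρ * σ) : ℤ) : ℝ) *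
          ∏ i, covM n K (σ i) ((ρ * σ) i) =
        ((Equiv.Perm.sign ρ : ℤ) : ℝ) * ∏ j, covM n K j (ρ j) := by
      intro ρ
      have h1 : ∏ i, covM n K (σ i) ((ρ * σ) i) = ∏ j, covM n K j (ρ j) := by
        rw [← Equiv.prod_comp σ (fun j => covM n K j (ρ j))]
        rfl
      rw [h1, Equiv.Perm.sign_mul]
      rcases Int.units_eq_one_or (Equiv.Perm.sign σ) with h | h <;> rw [h] <;> push_cast <;> ring
    simp_rw [Equiv.coe_mulRight, key]
    rw [← Matrix.det_transpose (covM n K), Matrix.det_apply']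
    exact Finset.sum_congr rfl fun ρ _ => by simp [Matrix.transpose_apply]
  simp_rw [inner_eq]
  rw [Finset.sum_const, Finset.card_univ, Fintype.card_perm, Fintype.card_fin, nsmul_eq_mul]

end Stmt11Helper

open Stmt11Helper in
/-- For any compact set `K` with positive volume and centroid at the
origin, `∫_K |x|² dx ≥ c₂ B(K)^{1/n}`, with equality iff `K` is isotropic; `c₂` is the same
dimensional constant for which equality holds for isotropic bodies. -/
theorem stmt11 (n : ℕ) (hn : 1 ≤ n) :
    ∃ c₂ : ℝ, 0 < c₂ ∧ ∀ K : Set (EuclideanSpace ℝ (Fin n)),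
      IsCompact K → 0 < volume K → (∫ x in K, x) = 0 →
      (c₂ * Bquant n K ^ ((1:ℝ)/n) ≤ ∫ x in K, ‖x‖ ^ 2) ∧
      ((∫ x in K, ‖x‖ ^ 2) = c₂ * Bquant n K ^ ((1:ℝ)/n) ↔
        ∃ c : ℝ, ∀ y ∈ Metric.sphere (0 : EuclideanSpace ℝ (Fin n)) 1,
          (∫ x in K, ⟪x, y⟫_ℝ ^ 2) = c) := by
  classical
  have hn0 : (0:ℝ) < n := by exact_mod_cast hn
  have hfac : (0:ℝ) < (n.factorial : ℝ) := by exact_mod_cast n.factorial_pos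
  have hfrp : (0:ℝ) < (n.factorial : ℝ) ^ ((1:ℝ)/n) := Real.rpow_pos_of_pos hfac _
  refine ⟨(n : ℝ) / (n.factorial : ℝ) ^ ((1:ℝ)/n), div_pos hn0 hfrp, ?_⟩
  intro K hK _hvol _hcent
  have hPSD := covM_posSemidef hK
  have hherm : (covM n K).IsHermitian := hPSD.1
  have heig : ∀ i, 0 ≤ hherm.eigenvalues i := fun i => hPSD.eigenvalues_nonneg i
  have hdet : (covM n K).det = ∏ i, hherm.eigenvalues i := by
    simpa using hherm.det_eq_prod_eigenvalues
  have hdetnn : 0 ≤ (covM n K).det := by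
    rw [hdet]; exact Finset.prod_nonneg fun i _ => heig i
  have hkey : (n : ℝ) / (n.factorial : ℝ) ^ ((1:ℝ)/n) * Bquant n K ^ ((1:ℝ)/n) =
      (n : ℝ) * (covM n K).det ^ ((1:ℝ)/n) := by
    rw [Bquant_eq hK, Real.mul_rpow hfac.le hdetnn]
    field_simp
  constructor
  · rw [hkey, integral_norm_sq hK, trace_eq_sum_eig hherm, hdet]
    exact amgm hn _ heig
  · rw [hkey, integral_norm_sq hK]
    have hchar : (∃ c : ℝ, ∀ y ∈ Metric.sphere (0 : EuclideanSpace ℝ (Fin n)) 1,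
        (∫ x in K, ⟪x, y⟫_ℝ ^ 2) = c) ↔
        ∃ c : ℝ, covM n K = c • (1 : Matrix (Fin n) (Fin n) ℝ) := by
      rw [← Qf_const_iff (covM n K) covM_symm]
      exact exists_congr fun c => forall₂_congr fun y _ => by rw [integral_inner_sq hK]
    rw [hchar]
    constructor
    · intro heq
      rw [trace_eq_sum_eig hherm, hdet] at heq
      have hall := amgm_eq hn _ heig heq
      have i0 : Fin n := ⟨0, hn⟩
      exact ⟨hherm.eigenvalues i0, eig_const_smul hherm _ (fun i => hall i i0)⟩
    · rintro ⟨c, hc⟩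
      have i0 : Fin n := ⟨0, hn⟩
      have hc0 : 0 ≤ c := by
        have h1 : covM n K i0 i0 = c := by
          rw [hc]; simp [Matrix.smul_apply, Matrix.one_apply]
        rw [← h1]
        exact integral_nonneg fun x => mul_self_nonneg _
      rw [hc, Matrix.trace_smul, Matrix.trace_one, Matrix.det_smul, Matrix.det_one, mul_one]
      have h2 : ((c ^ (Fintype.card (Fin n)) : ℝ)) ^ ((1:ℝ)/n) = c := by
        rw [Fintype.card_fin, ← Real.rpow_natCast c n, ← Real.rpow_mul hc0]
        rw [show (n:ℝ) * ((1:ℝ)/n) = 1 by field_simp]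
        exact Real.rpow_one c
      rw [h2]
      simp [Fintype.card_fin, smul_eq_mul]
      ring
end
end
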